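/- arXiv:1312.0533 — 8 statements merged into one kernel-verified Lean document; each statement's English description precedes it below -/
import Mathlib

section
/- Let T ≥ 0, let W : [0,T] → ℝ be continuous, let w ∈ ℂ with Im w > 0, and let g be a solution of the chordal Loewner ODE started at w on [0,T]. Then for every t ∈ [0,T] one has (Im g(t))² ≥ (Im w)² − 4t. In particular, if Im w ≥ 3√T, then Im g(t) ≥ 2√t for all t ∈ [0,T]. -/
open Set

/-- `IsLoewnerSolution T W w g` means that `g` is a solution of the chordal Loewner ODE
`g'(t) = 2 / (g(t) - W(t))` on `[0,T]`, started at `w`, staying in the open upper half-plane. -/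
def IsLoewnerSolution (T : ℝ) (W : ℝ → ℝ) (w : ℂ) (g : ℝ → ℂ) : Prop :=
  g 0 = w ∧ ∀ t ∈ Icc 0 T,
    HasDerivWithinAt g (2 / (g t - (W t : ℂ))) (Icc 0 T) t ∧ 0 < (g t).im

theorem im_sq_ge_of_loewner (T : ℝ) (hT : 0 ≤ T) (W : ℝ → ℝ)
    (hW : ContinuousOn W (Icc 0 T)) (w : ℂ) (hw : 0 < w.im) (g : ℝ → ℂ)
    (hg : IsLoewnerSolution T W w g) :
    ∀ t ∈ Icc 0 T, (g t).im ^ 2 ≥ w.im ^ 2 - 4 * t ∧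
      (w.im ≥ 3 * Real.sqrt T → (g t).im ≥ 2 * Real.sqrt t) := by
  obtain ⟨hg0, hgd⟩ := hg
  -- the function h t = (Im g t)^2 + 4t is monotone on [0,T]
  set h : ℝ → ℝ := fun t => (g t).im ^ 2 + 4 * t with hh
  have hint : interior (Icc (0:ℝ) T) ⊆ Icc 0 T := interior_subset
  have himderiv : ∀ t ∈ Icc 0 T,
      HasDerivWithinAt (fun s => (g s).im) ((2 / (g t - (W t : ℂ))).im) (Icc 0 T) t := by
    intro t ht
    exact (Complex.imCLM.hasFDerivAt.comp_hasDerivWithinAt t (hgd t ht).1)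
  have hhd : ∀ t ∈ Icc 0 T,
      HasDerivWithinAt h (2 * (g t).im * (2 / (g t - (W t : ℂ))).im + 4) (Icc 0 T) t := by
    intro t ht
    have h1 := ((himderiv t ht).pow 2).add ((hasDerivWithinAt_id t _).const_mul (4:ℝ))
    exact h1.congr_deriv (by norm_num)
  have hderiv_nonneg : ∀ t ∈ Icc 0 T,
      0 ≤ 2 * (g t).im * (2 / (g t - (W t : ℂ))).im + 4 := by
    intro t ht
    set z : ℂ := g t - (W t : ℂ) with hz
    have him : z.im = (g t).im := by simp [hz]
    have hzim : 0 < z.im := him ▸ (hgd t ht).2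
    have hzne : z ≠ 0 := fun h => by simp [h] at hzim
    have hN : 0 < Complex.normSq z := Complex.normSq_pos.2 hzne
    have hdivim : (2 / z).im = -2 * z.im / Complex.normSq z := by
      rw [Complex.div_im]
      simp [Complex.normSq]
      ring
    rw [hdivim, ← him]
    have hle : z.im ^ 2 ≤ Complex.normSq z := by
      rw [Complex.normSq_apply]; nlinarith [sq_nonneg z.re]
    rw [div_eq_mul_inv]
    have : 2 * z.im * (-2 * z.im * (Complex.normSq z)⁻¹) = -4 * (z.im ^2 / Complex.normSq z) := by
      rw [div_eq_mul_inv]; ring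
    rw [this]
    have : z.im ^ 2 / Complex.normSq z ≤ 1 := (div_le_one hN).2 hle
    linarith
  have hcont : ContinuousOn h (Icc 0 T) := fun t ht =>
    ((hhd t ht).continuousWithinAt)
  have hmono : MonotoneOn h (Icc 0 T) :=
    monotoneOn_of_hasDerivWithinAt_nonneg (convex_Icc 0 T) hcont
      (fun t ht => ((hhd t (hint ht)).mono hint))
      (fun t ht => hderiv_nonneg t (hint ht))
  intro t ht
  have h0mem : (0:ℝ) ∈ Icc (0:ℝ) T := ⟨le_refl 0, hT⟩
  have key : w.im ^ 2 ≤ (g t).im ^ 2 + 4 * t := by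
    have := hmono h0mem ht ht.1
    simpa [hh, hg0] using this
  have hpos : 0 < (g t).im := (hgd t ht).2
  refine ⟨by linarith, fun hbig => ?_⟩
  have hT2 : w.im ^ 2 ≥ 9 * T := by
    have h9 : (3 * Real.sqrt T) ^ 2 = 9 * T := by
      rw [mul_pow, Real.sq_sqrt hT]; ring
    nlinarith [Real.sqrt_nonneg T, hw.le]
  have h4t : 4 * t ≤ (g t).im ^ 2 := by nlinarith [ht.1, ht.2]
  have : 2 * Real.sqrt t = Real.sqrt (4 * t) := by
    rw [show (4:ℝ) * t = 2^2 * t by ring, Real.sqrt_mul (by positivity), Real.sqrt_sq (by norm_num)]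
  rw [this]
  calc Real.sqrt (4 * t) ≤ Real.sqrt ((g t).im ^ 2) := Real.sqrt_le_sqrt h4t
    _ = (g t).im := Real.sqrt_sq hpos.le
end

section
/- Let W : [0,∞) → ℝ be continuous and let w ∈ ℂ with Im w > 0. Then for every T with 0 ≤ T < (Im w)²/4, there exists a solution g of the chordal Loewner ODE started at w on [0,T]; that is, the solution of the Loewner equation started at a point w of the upper half-plane exists (and stays in the open upper half-plane) at least up to time (Im w)²/4. -/
open Set

theorem loewner_solution_exists (W : ℝ → ℝ) (hW : ContinuousOn W (Ici 0))
    (w : ℂ) (hw : 0 < w.im) :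
    ∀ T : ℝ, 0 ≤ T → T < w.im ^ 2 / 4 → ∃ g : ℝ → ℂ, IsLoewnerSolution T W w g := by
  intro T hT0 hT
  have hsub : (0:ℝ) < w.im ^ 2 - 4 * T := by linarith
  set ε : ℝ := Real.sqrt (w.im ^ 2 - 4 * T) with hεdef
  have hε2 : ε ^ 2 = w.im ^ 2 - 4 * T := Real.sq_sqrt hsub.le
  have hεpos : 0 < ε := Real.sqrt_pos.2 hsub
  have hεle : ε ≤ w.im := by nlinarith
  -- the clamped vector field
  set d : ℝ → ℂ → ℂ := fun t z => ((z.re - W t : ℝ) : ℂ) + (max z.im ε : ℝ) * Complex.I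
    with hd_def
  set v : ℝ → ℂ → ℂ := fun t z => 2 / d t z with hv_def
  have hd_re : ∀ t z, (d t z).re = z.re - W t := by intro t z; simp [hd_def]
  have hd_im : ∀ t z, (d t z).im = max z.im ε := by intro t z; simp [hd_def]
  have hd_norm : ∀ t z, ε ≤ ‖d t z‖ := by
    intro t z
    calc ε ≤ |(d t z).im| := by rw [hd_im]; exact (le_max_right _ _).trans (le_abs_self _)
    _ ≤ ‖d t z‖ := Complex.abs_im_le_norm _
    _ = ‖d t z‖ := rfl
  have hd_ne : ∀ t z, d t z ≠ 0 := by
    intro t z h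
    have := hd_norm t z
    rw [h, norm_zero] at this
    exact absurd this (not_le.2 hεpos)
  have hC : ∀ t z, ‖v t z‖ ≤ 2 / ε := by
    intro t z
    simp only [hv_def, norm_div, Complex.norm_ofNat]
    exact div_le_div_of_nonneg_left (by norm_num) hεpos (hd_norm t z)
  -- Lipschitz
  set L : NNReal := Real.toNNReal (2 / ε ^ 2) with hL_def
  have hLip : ∀ t, LipschitzWith L (v t) := by
    intro t
    refine LipschitzWith.of_dist_le_mul fun z₁ z₂ => ?_
    have hdd : ‖d t z₁ - d t z₂‖ ≤ dist z₁ z₂ := by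
      rw [Complex.dist_eq, Complex.norm_def, Complex.norm_def]
      apply Real.sqrt_le_sqrt
      have h1 : (d t z₁ - d t z₂).re = z₁.re - z₂.re := by
        simp only [Complex.sub_re, hd_re]; ring
      have h2 : (d t z₁ - d t z₂).im = max z₁.im ε - max z₂.im ε := by
        simp only [Complex.sub_im, hd_im]
      have h3 : |max z₁.im ε - max z₂.im ε| ≤ |z₁.im - z₂.im| := by
        have := abs_max_sub_max_le_max z₁.im ε z₂.im ε
        simpa using this
      rw [Complex.normSq_apply, Complex.normSq_apply, h1, h2, Complex.sub_re, Complex.sub_im]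
      have h4 : (max z₁.im ε - max z₂.im ε) * (max z₁.im ε - max z₂.im ε)
          ≤ (z₁.im - z₂.im) * (z₁.im - z₂.im) := by
        have := mul_self_le_mul_self (abs_nonneg _) h3
        simpa [abs_mul_abs_self] using this
      linarith
    have key : dist (v t z₁) (v t z₂) = 2 * ‖d t z₂ - d t z₁‖ / (‖d t z₁‖ * ‖d t z₂‖) := by
      rw [dist_eq_norm]
      have heq : v t z₁ - v t z₂ = 2 * (d t z₂ - d t z₁) / (d t z₁ * d t z₂) := by
        simp only [hv_def]
        field_simp [hd_ne t z₁, hd_ne t z₂]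
      rw [heq]
      simp only [norm_div, norm_mul, Complex.norm_ofNat]
    rw [key]
    have h1 := hd_norm t z₁
    have h2 := hd_norm t z₂
    have hdd' : ‖d t z₂ - d t z₁‖ ≤ dist z₁ z₂ := by
      rw [← norm_neg]; simpa [dist_comm z₁ z₂, dist_eq_norm] using hdd
    have hL' : (L : ℝ) = 2 / ε ^ 2 := Real.coe_toNNReal _ (by positivity)
    rw [hL', div_le_iff₀ (mul_pos (lt_of_lt_of_le hεpos h1) (lt_of_lt_of_le hεpos h2))]
    have hnn : (0:ℝ) ≤ dist z₁ z₂ := dist_nonneg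
    calc 2 * ‖d t z₂ - d t z₁‖ ≤ 2 * dist z₁ z₂ := by linarith
    _ ≤ 2 / ε ^ 2 * dist z₁ z₂ * (ε * ε) := by
        rw [div_mul_eq_mul_div, div_mul_eq_mul_div, le_div_iff₀ (by positivity)]
        ring_nf
        nlinarith
    _ ≤ 2 / ε ^ 2 * dist z₁ z₂ * (‖d t z₁‖ * ‖d t z₂‖) := by
        apply mul_le_mul_of_nonneg_left _ (by positivity)
        exact mul_le_mul h1 h2 hεpos.le (norm_nonneg _)
  -- continuity in t
  have hcont : ∀ z : ℂ, ContinuousOn (fun t => v t z) (Icc 0 T) := by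
    intro z
    have hWc : ContinuousOn W (Icc 0 T) := hW.mono (fun x hx => hx.1)
    have hdc : ContinuousOn (fun t => d t z) (Icc 0 T) := by
      simp only [hd_def]
      exact ((Complex.continuous_ofReal.comp_continuousOn
        (continuousOn_const.sub hWc))).add continuousOn_const
    simp only [hv_def]
    exact continuousOn_const.div hdc (fun t _ => hd_ne t z)
  -- Picard–Lindelöf
  have hpl : IsPicardLindelof v (tmin := 0) (tmax := T) ⟨0, ⟨le_refl 0, hT0⟩⟩ w
      (Real.toNNReal (2 / ε * T)) 0 (Real.toNNReal (2 / ε)) L := by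
    have hc1 : ((Real.toNNReal (2 / ε) : NNReal) : ℝ) = 2 / ε := Real.coe_toNNReal _ (by positivity)
    have hc2 : ((Real.toNNReal (2 / ε * T) : NNReal) : ℝ) = 2 / ε * T :=
      Real.coe_toNNReal _ (by positivity)
    refine ⟨?_, ?_, ?_, ?_⟩
    · exact fun t _ => (hLip t).lipschitzOnWith
    · exact fun z _ => hcont z
    · intro t _ z _; rw [hc1]; exact hC t z
    · rw [hc1, hc2]; simp [max_eq_left hT0]
  obtain ⟨g, hg0', hgd⟩ := hpl.exists_eq_forall_mem_Icc_hasDerivWithinAt₀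
  have hg0 : g 0 = w := hg0'
  -- imaginary part estimate
  set u : ℝ → ℝ := fun t => (g t).im with hu_def
  have hud : ∀ t ∈ Icc 0 T, HasDerivWithinAt u ((v t (g t)).im) (Icc 0 T) t := by
    intro t ht
    exact Complex.imCLM.hasFDerivAt.comp_hasDerivWithinAt t (hgd t ht)
  have him_v : ∀ t z, (v t z).im = -2 * max z.im ε / Complex.normSq (d t z) := by
    intro t z
    simp only [hv_def, div_eq_mul_inv, Complex.mul_im, Complex.inv_im, Complex.inv_re, hd_im]
    norm_num
    ring
  set φ : ℝ → ℝ := fun t => u t ^ 2 + 4 * t with hφ_def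
  have hφd : ∀ t ∈ Icc 0 T,
      HasDerivWithinAt φ (2 * u t * (v t (g t)).im + 4) (Icc 0 T) t := by
    intro t ht
    have h1 : HasDerivWithinAt (fun s => u s ^ 2) (2 * u t * (v t (g t)).im) (Icc 0 T) t := by
      have := (hud t ht).fun_pow 2
      simpa [mul_comm, mul_assoc, mul_left_comm] using this
    have h2 : HasDerivWithinAt (fun s : ℝ => 4 * s) 4 (Icc 0 T) t := by
      simpa using (hasDerivWithinAt_id t (Icc 0 T)).const_mul (4:ℝ)
    exact h1.add h2
  have hφ'_nonneg : ∀ t ∈ Icc 0 T, 0 ≤ 2 * u t * (v t (g t)).im + 4 := by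
    intro t ht
    rw [him_v]
    set m : ℝ := max (g t).im ε with hm_def
    have hmε : ε ≤ m := le_max_right _ _
    have hmu : u t ≤ m := le_max_left _ _
    have hmpos : 0 < m := lt_of_lt_of_le hεpos hmε
    have hns : Complex.normSq (d t (g t)) = ((g t).re - W t) ^ 2 + m ^ 2 := by
      rw [Complex.normSq_apply, hd_re, hd_im, ← hm_def]; ring
    rw [hns]
    set x : ℝ := (g t).re - W t
    have hspos : (0:ℝ) < x ^ 2 + m ^ 2 := by positivity
    have key : u t * m ≤ x ^ 2 + m ^ 2 := by
      nlinarith [sq_nonneg x, mul_nonneg hmpos.le (sub_nonneg.2 hmu)]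
    have heq : 2 * u t * (-2 * m / (x ^ 2 + m ^ 2)) + 4
        = 4 - 4 * (u t * m) / (x ^ 2 + m ^ 2) := by
      field_simp
      ring
    rw [heq, sub_nonneg, div_le_iff₀ hspos]
    linarith
  -- monotonicity of φ
  have hφmono : MonotoneOn φ (Icc 0 T) := by
    apply monotoneOn_of_deriv_nonneg (convex_Icc 0 T)
    · exact fun t ht => (hφd t ht).continuousWithinAt
    · intro t ht
      rw [interior_Icc] at ht
      exact (((hφd t (Ioo_subset_Icc_self ht)).hasDerivAt
        (Icc_mem_nhds ht.1 ht.2)).differentiableAt).differentiableWithinAt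
    · intro t ht
      rw [interior_Icc] at ht
      have h := (hφd t (Ioo_subset_Icc_self ht)).hasDerivAt (Icc_mem_nhds ht.1 ht.2)
      rw [h.deriv]
      exact hφ'_nonneg t (Ioo_subset_Icc_self ht)
  have hu0 : u 0 = w.im := by rw [hu_def]; simp [hg0]
  have hsq : ∀ t ∈ Icc 0 T, ε ^ 2 ≤ u t ^ 2 := by
    intro t ht
    have h0 : φ 0 ≤ φ t := hφmono ⟨le_refl 0, hT0⟩ ht ht.1
    have : φ 0 = w.im ^ 2 := by simp [hφ_def, hu0]
    have htT : t ≤ T := ht.2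
    simp only [hφ_def] at h0
    rw [hu0] at h0
    nlinarith
  have hucont : ContinuousOn u (Icc 0 T) := fun t ht => (hud t ht).continuousWithinAt
  have hsign : ∀ t ∈ Icc 0 T, ε ≤ u t := by
    intro t ht
    by_contra hlt
    push_neg at hlt
    have hneg : u t ≤ -ε := by nlinarith [hsq t ht]
    have h0mem : (0:ℝ) ∈ Icc (u t) (u 0) := by
      rw [hu0]; exact ⟨by linarith, by linarith⟩
    have := intermediate_value_Icc' ht.1 (hucont.mono (Icc_subset_Icc_right ht.2)) h0mem
    obtain ⟨s, hs, hus⟩ := this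
    have hsmem : s ∈ Icc 0 T := ⟨hs.1, hs.2.trans ht.2⟩
    have := hsq s hsmem
    rw [hus] at this
    nlinarith
  -- conclusion
  refine ⟨g, hg0, fun t ht => ?_⟩
  have hεu : ε ≤ (g t).im := hsign t ht
  have him : 0 < (g t).im := lt_of_lt_of_le hεpos hεu
  have hdg : d t (g t) = g t - (W t : ℂ) := by
    apply Complex.ext
    · rw [hd_re]; simp
    · rw [hd_im, max_eq_left hεu]; simp
  refine ⟨?_, him⟩
  have := hgd t ht
  simp only [hv_def] at this
  rwa [hdg] at this
end

section
/- Let T ≥ 0, let W : [0,T] → ℝ be continuous, let w ∈ ℂ with (Im w)² > 4T and Im w > 0, and let g be a solution of the chordal Loewner ODE started at w on [0,T]. Then g is Lipschitz in time: for all s, t ∈ [0,T] with s ≤ t, |g(t) − g(s)| ≤ 2(t − s)/√((Im w)² − 4T). -/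
open Set

theorem loewner_lipschitz_in_time (T : ℝ) (hT : 0 ≤ T) (W : ℝ → ℝ)
    (hW : ContinuousOn W (Icc 0 T)) (w : ℂ) (hw : 0 < w.im) (hw4 : w.im ^ 2 > 4 * T)
    (g : ℝ → ℂ) (hg : IsLoewnerSolution T W w g) :
    ∀ s ∈ Icc 0 T, ∀ t ∈ Icc 0 T, s ≤ t →
      ‖g t - g s‖ ≤ 2 * (t - s) / Real.sqrt (w.im ^ 2 - 4 * T) := by
  obtain ⟨hg0, hgd⟩ := hg
  set c : ℝ := Real.sqrt (w.im ^ 2 - 4 * T) with hc_def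
  have hc2 : 0 < w.im ^ 2 - 4 * T := by linarith
  have hc : 0 < c := Real.sqrt_pos.mpr hc2
  -- continuity of g on Icc 0 T
  have hgc : ContinuousOn g (Icc 0 T) := fun t ht =>
    (hgd t ht).1.continuousWithinAt
  -- derivative of the imaginary part
  have himd : ∀ t ∈ Icc 0 T,
      HasDerivWithinAt (fun u => (g u).im) ((2 / (g t - (W t : ℂ))).im) (Icc 0 T) t := by
    intro t ht
    exact Complex.imCLM.hasFDerivAt.comp_hasDerivWithinAt t (hgd t ht).1
  -- normSq (g t - W t) is positive and dominates (Im g t)^2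
  have hnormSq : ∀ t ∈ Icc 0 T,
      (g t).im ^ 2 ≤ Complex.normSq (g t - (W t : ℂ)) ∧
        0 < Complex.normSq (g t - (W t : ℂ)) := by
    intro t ht
    have him : (g t - (W t : ℂ)).im = (g t).im := by simp
    constructor
    · calc (g t).im ^ 2 = (g t - (W t : ℂ)).im ^ 2 := by rw [him]
        _ ≤ (g t - (W t : ℂ)).re ^ 2 + (g t - (W t : ℂ)).im ^ 2 := le_add_of_nonneg_left (sq_nonneg _)
        _ = Complex.normSq (g t - (W t : ℂ)) := by rw [Complex.normSq_apply]; ring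
    · have : (g t - (W t : ℂ)).im ≠ 0 := by rw [him]; exact (hgd t ht).2.ne'
      exact Complex.normSq_pos.mpr fun h => this (by rw [h]; rfl)
  -- the function h(t) = (Im g t)^2 + 4t is monotone on [0,T]
  have hmono : MonotoneOn (fun u => (g u).im ^ 2 + 4 * u) (Icc 0 T) := by
    apply monotoneOn_of_hasDerivWithinAt_nonneg (convex_Icc 0 T)
      (f' := fun u => 2 * (g u).im ^ 1 * (2 / (g u - (W u : ℂ))).im + 4)
    · exact ((Complex.continuous_im.comp_continuousOn hgc).pow 2).add
        (continuous_const.mul continuous_id).continuousOn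
    · intro t ht
      rw [interior_Icc] at ht
      have ht' : t ∈ Icc 0 T := Ioo_subset_Icc_self ht
      have h1 : HasDerivWithinAt (fun u => (g u).im ^ 2)
          ((2 : ℕ) * (g t).im ^ 1 * (2 / (g t - (W t : ℂ))).im) (Icc 0 T) t :=
        (himd t ht').pow 2
      have h2 : HasDerivWithinAt (fun u : ℝ => 4 * u) 4 (Icc 0 T) t := by
        simpa using (hasDerivWithinAt_id t (Icc 0 T)).const_mul 4
      rw [interior_Icc]
      exact ((h1.add h2).mono Ioo_subset_Icc_self).congr_deriv (by push_cast; ring)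
    · intro t ht
      rw [interior_Icc] at ht
      have ht' : t ∈ Icc 0 T := Ioo_subset_Icc_self ht
      obtain ⟨hle, hpos⟩ := hnormSq t ht'
      have hy : 0 < (g t).im := (hgd t ht').2
      have himval : (2 / (g t - (W t : ℂ))).im
          = -2 * (g t).im / Complex.normSq (g t - (W t : ℂ)) := by
        rw [div_eq_mul_inv, Complex.mul_im, Complex.inv_im, Complex.inv_re]
        simp
        ring
      have heq : 2 * (g t).im * (-2 * (g t).im / Complex.normSq (g t - (W t : ℂ))) + 4
          = 4 * (Complex.normSq (g t - (W t : ℂ)) - (g t).im ^ 2)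
            / Complex.normSq (g t - (W t : ℂ)) := by
        field_simp
        ring
      rw [himval, pow_one, heq]
      exact div_nonneg (by linarith) hpos.le
  -- lower bound on Im g t
  have him_lb : ∀ t ∈ Icc 0 T, c ≤ (g t).im := by
    intro t ht
    have h0 : (0 : ℝ) ∈ Icc 0 T := ⟨le_refl 0, hT⟩
    have := hmono h0 ht ht.1
    simp only [mul_zero, add_zero, hg0] at this
    have hsq : w.im ^ 2 - 4 * T ≤ (g t).im ^ 2 := by
      have : 4 * t ≤ 4 * T := by linarith [ht.2]
      nlinarith
    have hy : 0 < (g t).im := (hgd t ht).2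
    calc c ≤ Real.sqrt ((g t).im ^ 2) := Real.sqrt_le_sqrt hsq
      _ = (g t).im := by rw [Real.sqrt_sq hy.le]
  -- bound on the derivative
  have hbound : ∀ t ∈ Icc 0 T, ‖2 / (g t - (W t : ℂ))‖ ≤ 2 / c := by
    intro t ht
    have hy := him_lb t ht
    have hz : c ≤ ‖g t - (W t : ℂ)‖ := by
      refine hy.trans ?_
      have : (g t).im = (g t - (W t : ℂ)).im := by simp
      rw [this]
      exact (le_abs_self _).trans (Complex.abs_im_le_norm _)
    have hzpos : (0 : ℝ) < ‖g t - (W t : ℂ)‖ := hc.trans_le hz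
    rw [norm_div]
    simp only [Complex.norm_ofNat]
    exact div_le_div_of_nonneg_left (by norm_num) hc hz
  -- mean value inequality
  intro s hs t ht hst
  have key := Convex.norm_image_sub_le_of_norm_hasDerivWithin_le
    (f := g) (f' := fun u => 2 / (g u - (W u : ℂ))) (C := 2 / c)
    (fun u hu => (hgd u hu).1) hbound (convex_Icc 0 T) hs ht
  have : ‖t - s‖ = t - s := by
    rw [Real.norm_eq_abs, abs_of_nonneg (by linarith)]
  rw [this] at key
  calc ‖g t - g s‖ = ‖g t - g s‖ := rfl
    _ ≤ 2 / c * (t - s) := key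
    _ = 2 * (t - s) / c := by ring
end

section
/- Let T > 0, let W₁, W₂ : [0,T] → ℝ be continuous, let w ∈ ℂ with Im w ≥ 3√T, and let g₁, g₂ be solutions of the chordal Loewner ODE started at w on [0,T] with driving functions W₁ and W₂ respectively. Then for all t ∈ [0,T], |g₁(t) − g₂(t)| ≤ (sup_{s ∈ [0,T]} |W₁(s) − W₂(s)|) · (exp(2t/(5T)) − 1). In particular, if a sequence of driving functions converges uniformly on [0,T], then the corresponding Loewner flows evaluated at w converge uniformly on [0,T], and the solution started at w is unique. -/
open Set

lemma loewner_im_lb {T : ℝ} (hT : 0 < T) {W : ℝ → ℝ} {w : ℂ} (hw : w.im ≥ 3 * Real.sqrt T)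
    {g : ℝ → ℂ} (hg : IsLoewnerSolution T W w g) :
    ∀ t ∈ Icc 0 T, Real.sqrt (5 * T) ≤ (g t).im := by
  obtain ⟨h0, hode⟩ := hg
  have hcont : ContinuousOn g (Icc 0 T) := fun t ht => (hode t ht).1.continuousWithinAt
  have hmono : MonotoneOn (fun t => ((g t).im) ^ 2 + 4 * t) (Icc 0 T) := by
    apply monotoneOn_of_hasDerivWithinAt_nonneg (convex_Icc 0 T)
      (f' := fun t => 2 * (g t).im ^ 1 * (2 / (g t - (W t : ℂ))).im + 4 * 1)
    · exact ((Complex.continuous_im.comp_continuousOn hcont).pow 2).add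
        (continuousOn_const.mul continuousOn_id)
    · intro x hx
      have hx' : x ∈ Icc 0 T := interior_subset hx
      have hder : HasDerivWithinAt g (2 / (g x - (W x : ℂ))) (interior (Icc 0 T)) x :=
        (hode x hx').1.mono interior_subset
      have him : HasDerivWithinAt (fun t => (g t).im) ((2 / (g x - (W x : ℂ))).im)
          (interior (Icc 0 T)) x :=
        Complex.imCLM.hasFDerivAt.comp_hasDerivWithinAt x hder
      exact (him.pow 2).add ((hasDerivWithinAt_id x _).const_mul 4)
    · intro x hx
      have hx' : x ∈ Icc 0 T := interior_subset hx
      set z : ℂ := g x - (W x : ℂ) with hz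
      have hzim : z.im = (g x).im := by simp [hz]
      have himpos : 0 < (g x).im := (hode x hx').2
      have hnq : 0 < Complex.normSq z := by
        apply Complex.normSq_pos.2
        intro h
        rw [h] at hzim
        simp at hzim
        exact himpos.ne' hzim.symm
      have hle : (g x).im ^ 2 ≤ Complex.normSq z := by
        rw [Complex.normSq_apply, hzim]
        nlinarith [sq_nonneg z.re]
      have hdiv : (g x).im ^ 2 / Complex.normSq z ≤ 1 := (div_le_one hnq).2 hle
      have h2im : (2 / z).im = -(2 * (g x).im / Complex.normSq z) := by
        rw [Complex.div_im, hzim]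
        simp
      rw [h2im]
      have e : 2 * (g x).im ^ 1 * -(2 * (g x).im / Complex.normSq z) + 4 * 1
          = 4 * (1 - (g x).im ^ 2 / Complex.normSq z) := by
        field_simp
        ring
      rw [e]
      nlinarith
  intro t ht
  have h1 : w.im ^ 2 + 4 * 0 ≤ (g t).im ^ 2 + 4 * t := by
    have := hmono (left_mem_Icc.2 hT.le) ht ht.1
    simpa [h0] using this
  have hw2 : 9 * T ≤ w.im ^ 2 := by
    have h3 : (3 * Real.sqrt T) ^ 2 = 9 * T := by
      rw [mul_pow, Real.sq_sqrt hT.le]; ring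
    nlinarith [Real.sqrt_nonneg T]
  have h5 : 5 * T ≤ (g t).im ^ 2 := by nlinarith [ht.2]
  have himpos : 0 < (g t).im := (hode t ht).2
  calc Real.sqrt (5 * T) ≤ Real.sqrt ((g t).im ^ 2) := Real.sqrt_le_sqrt h5
    _ = (g t).im := by rw [Real.sqrt_sq himpos.le]

theorem loewner_continuity_in_driving_term (T : ℝ) (hT : 0 < T)
    (W₁ W₂ : ℝ → ℝ) (hW₁ : ContinuousOn W₁ (Icc 0 T)) (hW₂ : ContinuousOn W₂ (Icc 0 T))
    (w : ℂ) (hw : w.im ≥ 3 * Real.sqrt T) (g₁ g₂ : ℝ → ℂ)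
    (hg₁ : IsLoewnerSolution T W₁ w g₁) (hg₂ : IsLoewnerSolution T W₂ w g₂) :
    (∀ t ∈ Icc 0 T,
      ‖g₁ t - g₂ t‖ ≤
        sSup ((fun s => |W₁ s - W₂ s|) '' Icc 0 T) * (Real.exp (2 * t / (5 * T)) - 1)) ∧
    ((∀ s ∈ Icc 0 T, W₁ s = W₂ s) → ∀ t ∈ Icc 0 T, g₁ t = g₂ t) := by
  have hlb₁ := loewner_im_lb hT hw hg₁
  have hlb₂ := loewner_im_lb hT hw hg₂
  obtain ⟨h01, hode₁⟩ := hg₁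
  obtain ⟨h02, hode₂⟩ := hg₂
  have hcont₁ : ContinuousOn g₁ (Icc 0 T) := fun t ht => (hode₁ t ht).1.continuousWithinAt
  have hcont₂ : ContinuousOn g₂ (Icc 0 T) := fun t ht => (hode₂ t ht).1.continuousWithinAt
  set M : ℝ := sSup ((fun s => |W₁ s - W₂ s|) '' Icc 0 T) with hMdef
  have hbdd : BddAbove ((fun s => |W₁ s - W₂ s|) '' Icc 0 T) :=
    isCompact_Icc.bddAbove_image (hW₁.sub hW₂).abs
  have hM : ∀ s ∈ Icc 0 T, |W₁ s - W₂ s| ≤ M := fun s hs => le_csSup hbdd ⟨s, hs, rfl⟩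
  have hM0 : 0 ≤ M := le_trans (abs_nonneg _) (hM 0 ⟨le_refl 0, hT.le⟩)
  have hs5 : 0 < Real.sqrt (5 * T) := Real.sqrt_pos.2 (by linarith)
  have hs5sq : Real.sqrt (5 * T) * Real.sqrt (5 * T) = 5 * T :=
    Real.mul_self_sqrt (by linarith)
  set K : ℝ := 2 / (5 * T) with hKdef
  have hK : 0 < K := by positivity
  have key : ∀ x ∈ Icc (0:ℝ) T,
      ‖g₁ x - g₂ x‖ ≤ gronwallBound 0 K (K * M) (x - 0) := by
    apply norm_le_gronwallBound_of_norm_deriv_right_le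
      (f' := fun x => 2 / (g₁ x - (W₁ x : ℂ)) - 2 / (g₂ x - (W₂ x : ℂ)))
      (hcont₁.sub hcont₂)
    · intro x hx
      have hx' : x ∈ Icc 0 T := Ico_subset_Icc_self hx
      have hmem : Icc (0:ℝ) T ∈ nhdsWithin x (Ici x) := by
        rw [mem_nhdsWithin]
        exact ⟨Iio T, isOpen_Iio, hx.2, fun y hy => ⟨le_trans hx.1 hy.2, hy.1.le⟩⟩
      exact (((hode₁ x hx').1.sub (hode₂ x hx').1).mono_of_mem_nhdsWithin hmem)
    · simp [h01, h02]
    · intro x hx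
      have hx' : x ∈ Icc 0 T := Ico_subset_Icc_self hx
      set a : ℂ := g₁ x - (W₁ x : ℂ) with ha
      set b : ℂ := g₂ x - (W₂ x : ℂ) with hb
      have haim : a.im = (g₁ x).im := by simp [ha]
      have hbim : b.im = (g₂ x).im := by simp [hb]
      have ha0 : a ≠ 0 := by
        intro h
        have := (hode₁ x hx').2
        rw [← haim, h] at this
        simp at this
      have hb0 : b ≠ 0 := by
        intro h
        have := (hode₂ x hx').2
        rw [← hbim, h] at this
        simp at this
      have haabs : Real.sqrt (5 * T) ≤ ‖a‖ := by
        calc Real.sqrt (5 * T) ≤ (g₁ x).im := hlb₁ x hx'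
          _ = a.im := haim.symm
          _ ≤ |a.im| := le_abs_self _
          _ ≤ ‖a‖ := Complex.abs_im_le_norm a
      have hbabs : Real.sqrt (5 * T) ≤ ‖b‖ := by
        calc Real.sqrt (5 * T) ≤ (g₂ x).im := hlb₂ x hx'
          _ = b.im := hbim.symm
          _ ≤ |b.im| := le_abs_self _
          _ ≤ ‖b‖ := Complex.abs_im_le_norm b
      have hfrac : 2 / a - 2 / b = 2 * (b - a) / (a * b) := by
        field_simp
      have hba : ‖b - a‖ ≤ ‖g₁ x - g₂ x‖ + M := by
        have : b - a = (g₂ x - g₁ x) + ((W₁ x : ℂ) - (W₂ x : ℂ)) := by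
          rw [ha, hb]; ring
        rw [this]
        calc ‖(g₂ x - g₁ x) + ((W₁ x : ℂ) - (W₂ x : ℂ))‖
            ≤ ‖g₂ x - g₁ x‖ + ‖(W₁ x : ℂ) - (W₂ x : ℂ)‖ :=
              norm_add_le _ _
          _ = ‖g₁ x - g₂ x‖ + |W₁ x - W₂ x| := by
              rw [← Complex.ofReal_sub, Complex.norm_real, Real.norm_eq_abs, norm_sub_rev]
          _ ≤ ‖g₁ x - g₂ x‖ + M := by linarith [hM x hx']
      have hdenom : 5 * T ≤ ‖a‖ * ‖b‖ := by
        calc 5 * T = Real.sqrt (5 * T) * Real.sqrt (5 * T) := hs5sq.symm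
          _ ≤ ‖a‖ * ‖b‖ := by
              apply mul_le_mul haabs hbabs hs5.le (norm_nonneg a)
      show ‖2 / a - 2 / b‖ ≤ K * ‖g₁ x - g₂ x‖ + K * M
      rw [hfrac]
      have hnorm : ‖2 * (b - a) / (a * b)‖
          = 2 * ‖b - a‖ / (‖a‖ * ‖b‖) := by
        simp [norm_div, norm_mul]
      rw [hnorm]
      have h5T : (0:ℝ) < 5 * T := by linarith
      calc 2 * ‖b - a‖ / (‖a‖ * ‖b‖)
          ≤ 2 * (‖g₁ x - g₂ x‖ + M) / (5 * T) := by
            apply div_le_div₀ (by positivity) (by linarith) h5T hdenom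
        _ = K * ‖g₁ x - g₂ x‖ + K * M := by
            rw [hKdef]
            field_simp
  have part1 : ∀ t ∈ Icc 0 T,
      ‖g₁ t - g₂ t‖ ≤ M * (Real.exp (2 * t / (5 * T)) - 1) := by
    intro t ht
    have := key t ht
    rw [gronwallBound_of_K_ne_0 hK.ne'] at this
    have harg : K * (t - 0) = 2 * t / (5 * T) := by rw [hKdef]; ring
    have hcoef : K * M / K = M := by field_simp
    simpa only [harg, hcoef, zero_mul, zero_add] using this
  refine ⟨part1, fun hEq t ht => ?_⟩
  have hM00 : M = 0 := by
    rw [hMdef]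
    have himg : (fun s => |W₁ s - W₂ s|) '' Icc 0 T = {0} := by
      apply Subset.antisymm
      · rintro y ⟨s, hs, rfl⟩
        simp [hEq s hs]
      · rintro y hy
        rw [mem_singleton_iff] at hy
        exact ⟨0, ⟨le_refl 0, hT.le⟩, by simp [hEq 0 ⟨le_refl 0, hT.le⟩, hy]⟩
    rw [himg, csSup_singleton]
  have := part1 t ht
  rw [hM00, zero_mul] at this
  have h0' : ‖g₁ t - g₂ t‖ = 0 :=
    le_antisymm this (norm_nonneg _)
  exact sub_eq_zero.1 (norm_eq_zero.1 h0')
end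

section
/- Let T ≥ 0, let W : [0,T] → ℝ be continuous, let w ∈ ℂ with Im w > 0 and (Im w)² > 4T, and let g be a solution of the chordal Loewner ODE started at w on [0,T]. Let u : [0,T] → ℂ be differentiable with u(0) = 1 and u'(t) = −2·u(t)/(g(t) − W(t))² for all t ∈ [0,T] (the derivative flow of the Loewner equation). Then for all t ∈ [0,T], |u(t)| ≤ Im w / √((Im w)² − 4t). -/
open Set

theorem loewner_derivative_flow_bound (T : ℝ) (hT : 0 ≤ T) (W : ℝ → ℝ)
    (hW : ContinuousOn W (Icc 0 T)) (w : ℂ) (hw : 0 < w.im) (hw4 : w.im ^ 2 > 4 * T)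
    (g : ℝ → ℂ) (hg : IsLoewnerSolution T W w g) (u : ℝ → ℂ) (hu0 : u 0 = 1)
    (hu : ∀ t ∈ Icc 0 T,
      HasDerivWithinAt u (-2 * u t / (g t - (W t : ℂ)) ^ 2) (Icc 0 T) t) :
    ∀ t ∈ Icc 0 T, ‖u t‖ ≤ w.im / Real.sqrt (w.im ^ 2 - 4 * t) := by
  obtain ⟨hg0, hgode⟩ := hg
  set s : Set ℝ := Icc 0 T with hs
  have h0s : (0 : ℝ) ∈ s := ⟨le_refl 0, hT⟩
  have hyp : ∀ t ∈ s, 0 < (g t).im := fun t ht => (hgode t ht).2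
  have hzne : ∀ t ∈ s, g t - (W t : ℂ) ≠ 0 := by
    intro t ht h
    have : (g t - (W t : ℂ)).im = 0 := by rw [h]; simp
    simp only [Complex.sub_im, Complex.ofReal_im, sub_zero] at this
    exact (hyp t ht).ne' this
  have hNz : ∀ t ∈ s, 0 < Complex.normSq (g t - (W t : ℂ)) := fun t ht =>
    Complex.normSq_pos.mpr (hzne t ht)
  -- derivative of Im g
  have hyderiv : ∀ t ∈ s, HasDerivWithinAt (fun t => (g t).im)
      (-2 * (g t).im / Complex.normSq (g t - (W t : ℂ))) s t := by
    intro t ht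
    have h := Complex.imCLM.hasFDerivAt.comp_hasDerivWithinAt t (hgode t ht).1
    refine h.congr_deriv ?_
    simp only [Complex.imCLM_apply, Complex.div_im, Complex.normSq_apply]
    simp [Complex.normSq_apply]
    ring
  -- derivative of normSq ∘ u
  have hnderiv : ∀ t ∈ s, HasDerivWithinAt (fun t => Complex.normSq (u t))
      (2 * ((u t).re * (-2 * u t / (g t - (W t : ℂ)) ^ 2).re
        + (u t).im * (-2 * u t / (g t - (W t : ℂ)) ^ 2).im)) s t := by
    intro t ht
    have hre : HasDerivWithinAt (fun t => (u t).re)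
        (-2 * u t / (g t - (W t : ℂ)) ^ 2).re s t :=
      Complex.reCLM.hasFDerivAt.comp_hasDerivWithinAt t (hu t ht)
    have him : HasDerivWithinAt (fun t => (u t).im)
        (-2 * u t / (g t - (W t : ℂ)) ^ 2).im s t :=
      Complex.imCLM.hasFDerivAt.comp_hasDerivWithinAt t (hu t ht)
    have h := (hre.mul hre).add (him.mul him)
    have heq : ∀ x : ℝ, Complex.normSq (u x) = (u x).re * (u x).re + (u x).im * (u x).im :=
      fun x => Complex.normSq_apply _
    simp only [heq]
    refine h.congr_deriv ?_
    ring
  -- key bound on the derivative of normSq ∘ u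
  have hnbound : ∀ t ∈ s,
      2 * ((u t).re * (-2 * u t / (g t - (W t : ℂ)) ^ 2).re
        + (u t).im * (-2 * u t / (g t - (W t : ℂ)) ^ 2).im)
      ≤ 4 * Complex.normSq (u t) / Complex.normSq (g t - (W t : ℂ)) := by
    intro t ht
    set d : ℂ := -2 * u t / (g t - (W t : ℂ)) ^ 2 with hd
    have h1 : (u t).re * d.re + (u t).im * d.im = (d * (starRingEnd ℂ) (u t)).re := by
      simp [Complex.mul_re, Complex.conj_re, Complex.conj_im]; ring
    have h2 : (d * (starRingEnd ℂ) (u t)).re ≤ ‖d‖ * ‖u t‖ := by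
      calc (d * (starRingEnd ℂ) (u t)).re ≤ ‖d * (starRingEnd ℂ) (u t)‖ :=
            Complex.re_le_norm _
        _ = ‖d‖ * ‖u t‖ := by rw [norm_mul, Complex.norm_conj]
    have h3 : ‖d‖ = 2 * ‖u t‖ / Complex.normSq (g t - (W t : ℂ)) := by
      rw [hd, norm_div, norm_mul, norm_pow]
      rw [Complex.sq_norm]
      simp
    rw [h1]
    calc 2 * (d * (starRingEnd ℂ) (u t)).re ≤ 2 * (‖d‖ * ‖u t‖) := by
          linarith
      _ = 4 * Complex.normSq (u t) / Complex.normSq (g t - (W t : ℂ)) := by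
          rw [h3, ← Complex.sq_norm (u t)]; ring
  -- G : t ↦ (Im g t)² + 4t is monotone on s
  have hGmono : MonotoneOn (fun t => (g t).im ^ 2 + 4 * t) s := by
    apply monotoneOn_of_hasDerivWithinAt_nonneg (convex_Icc 0 T)
      (f' := fun t => 2 * (g t).im * (-2 * (g t).im / Complex.normSq (g t - (W t : ℂ))) + 4)
    · intro t ht
      exact (((hyderiv t ht).pow 2).add ((hasDerivWithinAt_id t s).const_mul 4)).continuousWithinAt
    · intro t ht
      have ht' : t ∈ s := interior_subset ht
      have h := (((hyderiv t ht').pow 2).add ((hasDerivWithinAt_id t s).const_mul 4)).mono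
        interior_subset
      refine h.congr_deriv ?_
      ring
    · intro t ht
      have ht' : t ∈ s := interior_subset ht
      have hN := hNz t ht'
      have him2 : (g t).im ^ 2 ≤ Complex.normSq (g t - (W t : ℂ)) := by
        rw [Complex.normSq_apply]
        simp only [Complex.sub_im, Complex.ofReal_im, sub_zero]
        nlinarith [sq_nonneg ((g t - (W t : ℂ)).re)]
      have : 2 * (g t).im * (-2 * (g t).im / Complex.normSq (g t - (W t : ℂ)))
          = -4 * ((g t).im ^ 2 / Complex.normSq (g t - (W t : ℂ))) := by ring
      rw [this]
      have : (g t).im ^ 2 / Complex.normSq (g t - (W t : ℂ)) ≤ 1 :=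
        (div_le_one hN).mpr him2
      nlinarith [div_nonneg (sq_nonneg (g t).im) hN.le]
  -- F : t ↦ normSq (u t) * (Im g t)² is antitone on s
  have hFanti : AntitoneOn (fun t => Complex.normSq (u t) * (g t).im ^ 2) s := by
    apply antitoneOn_of_hasDerivWithinAt_nonpos (convex_Icc 0 T)
      (f' := fun t =>
        2 * ((u t).re * (-2 * u t / (g t - (W t : ℂ)) ^ 2).re
          + (u t).im * (-2 * u t / (g t - (W t : ℂ)) ^ 2).im) * (g t).im ^ 2
        + Complex.normSq (u t) *
          (2 * (g t).im * (-2 * (g t).im / Complex.normSq (g t - (W t : ℂ)))))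
    · intro t ht
      exact ((hnderiv t ht).mul ((hyderiv t ht).pow 2)).continuousWithinAt
    · intro t ht
      have ht' : t ∈ s := interior_subset ht
      have h := ((hnderiv t ht').mul ((hyderiv t ht').pow 2)).mono interior_subset
      refine h.congr_deriv ?_
      simp only [Pi.pow_apply]
      ring
    · intro t ht
      have ht' : t ∈ s := interior_subset ht
      have hN := hNz t ht'
      have hb := hnbound t ht'
      have hn0 : 0 ≤ Complex.normSq (u t) := Complex.normSq_nonneg _
      have hy2 : 0 ≤ (g t).im ^ 2 := sq_nonneg _
      have key : Complex.normSq (u t) *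
          (2 * (g t).im * (-2 * (g t).im / Complex.normSq (g t - (W t : ℂ))))
          = -(4 * Complex.normSq (u t) / Complex.normSq (g t - (W t : ℂ))) * (g t).im ^ 2 := by
        ring
      rw [key]
      have := mul_le_mul_of_nonneg_right hb hy2
      linarith
  -- conclusion
  intro t ht
  have ht0 : 0 ≤ t := ht.1
  have htT : t ≤ T := ht.2
  have hpos : 0 < w.im ^ 2 - 4 * t := by nlinarith
  set a : ℝ := Real.sqrt (w.im ^ 2 - 4 * t) with ha
  have ha0 : 0 < a := Real.sqrt_pos.mpr hpos
  have ha2 : a ^ 2 = w.im ^ 2 - 4 * t := Real.sq_sqrt hpos.le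
  -- lower bound on Im g t
  have hG : w.im ^ 2 ≤ (g t).im ^ 2 + 4 * t := by
    have := hGmono h0s ht ht0
    simpa [hg0] using this
  have hy2ge : a ^ 2 ≤ (g t).im ^ 2 := by rw [ha2]; linarith
  -- upper bound on normSq u t * (Im g t)²
  have hF : Complex.normSq (u t) * (g t).im ^ 2 ≤ w.im ^ 2 := by
    have := hFanti h0s ht ht0
    simpa [hg0, hu0] using this
  have hnle : Complex.normSq (u t) ≤ w.im ^ 2 / a ^ 2 := by
    rw [le_div_iff₀ (by positivity)]
    calc Complex.normSq (u t) * a ^ 2 ≤ Complex.normSq (u t) * (g t).im ^ 2 :=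
          mul_le_mul_of_nonneg_left hy2ge (Complex.normSq_nonneg _)
      _ ≤ w.im ^ 2 := hF
  have : ‖u t‖ = Real.sqrt (Complex.normSq (u t)) := Complex.norm_def _
  rw [this]
  calc Real.sqrt (Complex.normSq (u t)) ≤ Real.sqrt (w.im ^ 2 / a ^ 2) :=
        Real.sqrt_le_sqrt hnle
    _ = w.im / a := by rw [← div_pow, Real.sqrt_sq (by positivity)]
end

section
/- Let t ≥ 0, x ∈ ℝ and C, R > 0, and let G be holomorphic on {w ∈ ℂ : |w| > R} with |G(w) − (w − x + 2t/w)| ≤ C·|w|⁻² for all |w| > R. Then there exist R'' ≥ R and C'' > 0 (depending only on R, C, x, t) such that for all w with |w| > R'' one has G(w) ≠ 0 and the derivative of −1/G satisfies |G'(w)/G(w)² − (1/w² + 2x/w³ + 3(x² − 2t)/w⁴)| ≤ C''·|w|⁻⁵. -/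
open Metric

lemma aux_rat_identity (t x : ℝ) (w : ℂ) (hw : w ≠ 0) :
    (1 - 2*(t:ℂ)/w^2) -
      (1/w^2 + 2*(x:ℂ)/w^3 + 3*((x:ℂ)^2 - 2*(t:ℂ))/w^4) * (w - (x:ℂ) + 2*(t:ℂ)/w)^2
    = ((4*(x:ℂ)^3 - 16*(x:ℂ)*(t:ℂ)) * w^3
        + (-3*(x:ℂ)^4 + 2*(x:ℂ)^2*(t:ℂ) + 20*(t:ℂ)^2) * w^2
        + (12*(x:ℂ)^3*(t:ℂ) - 32*(x:ℂ)*(t:ℂ)^2) * w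
        + (24*(t:ℂ)^3 - 12*(x:ℂ)^2*(t:ℂ)^2)) / w^6 := by
  have hcancel : w^11 * w⁻¹^11 = 1 := by
    rw [← mul_pow, mul_inv_cancel₀ hw, one_pow]
  field_simp
  ring

lemma aux_cubic (a3 a2 a1 a0 r : ℝ) (h2 : 0 ≤ a2) (h1 : 0 ≤ a1) (h0 : 0 ≤ a0)
    (hr : 1 ≤ r) :
    a3*r^3 + a2*r^2 + a1*r + a0 ≤ (a3 + a2 + a1 + a0)*r^3 := by
  have p23 : r^2 ≤ r^3 := pow_le_pow_right₀ hr (by norm_num)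
  have p13 : r ≤ r^3 := by
    have := pow_le_pow_right₀ hr (show 1 ≤ 3 by norm_num)
    simpa using this
  have p03 : (1:ℝ) ≤ r^3 := by
    have := pow_le_pow_right₀ hr (show 0 ≤ 3 by norm_num)
    simpa using this
  nlinarith [mul_le_mul_of_nonneg_left p23 h2, mul_le_mul_of_nonneg_left p13 h1,
    mul_le_mul_of_nonneg_left p03 h0]

set_option maxHeartbeats 1000000 in
theorem derivative_expansion (t x : ℝ) (ht : 0 ≤ t) (C R : ℝ) (hC : 0 < C) (hR : 0 < R)
    (G : ℂ → ℂ) (hhol : DifferentiableOn ℂ G {w : ℂ | R < ‖w‖})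
    (hG : ∀ w : ℂ, R < ‖w‖ →
      ‖G w - (w - (x : ℂ) + 2 * (t : ℂ) / w)‖ ≤ C / ‖w‖ ^ 2) :
    ∃ R'' : ℝ, R ≤ R'' ∧ ∃ C'' : ℝ, 0 < C'' ∧ ∀ w : ℂ, R'' < ‖w‖ →
      G w ≠ 0 ∧
      ‖deriv G w / (G w) ^ 2 -
          (1 / w ^ 2 + 2 * (x : ℂ) / w ^ 3 + 3 * ((x : ℂ) ^ 2 - 2 * (t : ℂ)) / w ^ 4)‖
        ≤ C'' / ‖w‖ ^ 5 := by
  have hSopen : IsOpen {z : ℂ | R < ‖z‖} :=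
    isOpen_lt continuous_const continuous_norm
  set E : ℂ → ℂ := fun z => G z - (z - (x:ℂ) + 2*(t:ℂ)/z) with hEdef
  have hG' : ∀ z : ℂ, R < ‖z‖ → ‖E z‖ ≤ C/‖z‖^2 := by
    intro z hz
    simpa only [hEdef] using
      hG z hz
  have hEdiff : DifferentiableOn ℂ E {z : ℂ | R < ‖z‖} := by
    intro z hz
    have hz0 : z ≠ 0 := by
      intro h
      rw [h] at hz
      simp only [Set.mem_setOf_eq, norm_zero] at hz
      linarith
    exact (hhol z hz).sub (((differentiableAt_id.sub_const _).add
      ((differentiableAt_const _).div differentiableAt_id hz0)).differentiableWithinAt)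
  set c3 : ℂ := 4*(x:ℂ)^3 - 16*(x:ℂ)*(t:ℂ) with hc3
  set c2 : ℂ := -3*(x:ℂ)^4 + 2*(x:ℂ)^2*(t:ℂ) + 20*(t:ℂ)^2 with hc2
  set c1 : ℂ := 12*(x:ℂ)^3*(t:ℂ) - 32*(x:ℂ)*(t:ℂ)^2 with hc1
  set c0 : ℂ := 24*(t:ℂ)^3 - 12*(x:ℂ)^2*(t:ℂ)^2 with hc0
  set B : ℝ := ‖c3‖ + ‖c2‖ + ‖c1‖ + ‖c0‖ with hB
  set M : ℝ := 1 + ‖2*(x:ℂ)‖ + ‖3*((x:ℂ)^2 - 2*(t:ℂ))‖ with hM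
  set K : ℝ := B + 8*C + M*(4*C + C^2) with hK
  have hBnn : 0 ≤ B := by positivity
  have hMpos : 0 < M := by positivity
  have hKpos : 0 < K := by positivity
  refine ⟨max (2*R) (2*(|x| + 2*t + C) + 1), le_max_of_le_left (by linarith), 4*K,
    by linarith, ?_⟩
  intro w hw
  set r := ‖w‖ with hr
  have hr2R : 2*R < r := lt_of_le_of_lt (le_max_left _ _) hw
  have hrbig : 2*(|x| + 2*t + C) + 1 < r := lt_of_le_of_lt (le_max_right _ _) hw
  have hxnn : 0 ≤ |x| := abs_nonneg x
  have hr1 : 1 ≤ r := by linarith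
  have hrpos : 0 < r := by linarith
  have hrR : R < r := by linarith
  have hw0 : w ≠ 0 := by
    intro h
    rw [h] at hr
    simp at hr
    linarith
  have hwS : w ∈ {z : ℂ | R < ‖z‖} := by
    simpa only [Set.mem_setOf_eq] using hrR
  -- Cauchy estimate for deriv E
  have hρ : 0 < r/2 := by linarith
  have hEderiv_bound : ‖deriv E w‖ ≤ 8*C/r^3 := by
    have hsub : closure (ball w (r/2)) ⊆ {z : ℂ | R < ‖z‖} := by
      refine closure_ball_subset_closedBall.trans ?_
      intro z hz
      simp only [mem_closedBall, dist_eq_norm] at hz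
      have h1 : ‖w‖ - ‖z‖ ≤ ‖z - w‖ := by
        rw [norm_sub_rev]; exact norm_sub_norm_le w z
      simp only [Set.mem_setOf_eq]
      linarith
    have hdc : DiffContOnCl ℂ E (ball w (r/2)) := (hEdiff.mono hsub).diffContOnCl
    have hsphere : ∀ z ∈ sphere w (r/2), ‖E z‖ ≤ 4*C/r^2 := by
      intro z hz
      rw [mem_sphere, dist_eq_norm] at hz
      have h1 : ‖w‖ - ‖z‖ ≤ ‖z - w‖ := by
        rw [norm_sub_rev]; exact norm_sub_norm_le w z
      rw [hz] at h1
      have hzlb : r/2 ≤ ‖z‖ := by linarith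
      have hzR : R < ‖z‖ := by linarith
      have h2 := hG' z hzR
      have h3 : C / ‖z‖^2 ≤ C / (r/2)^2 := by
        apply div_le_div_of_nonneg_left hC.le (by positivity)
        exact pow_le_pow_left₀ (by linarith) hzlb 2
      have h4 : C / (r/2)^2 = 4*C/r^2 := by field_simp; ring
      linarith
    have hle := Complex.norm_deriv_le_of_forall_mem_sphere_norm_le hρ hdc hsphere
    have heq : (4*C/r^2) / (r/2) = 8*C/r^3 := by field_simp; ring
    linarith [heq ▸ hle]
  -- derivative of G
  have hEat : DifferentiableAt ℂ E w := hEdiff.differentiableAt (hSopen.mem_nhds hwS)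
  have hPder : HasDerivAt (fun z : ℂ => z - (x:ℂ) + 2*(t:ℂ)/z) (1 - 2*(t:ℂ)/w^2) w := by
    have h1 : HasDerivAt (fun z : ℂ => z - (x:ℂ)) 1 w := (hasDerivAt_id w).sub_const _
    have h2 : HasDerivAt (fun z : ℂ => 2*(t:ℂ)/z) (2*(t:ℂ) * (-(w^2)⁻¹)) w := by
      simpa [div_eq_mul_inv] using (hasDerivAt_inv hw0).const_mul (2*(t:ℂ))
    have h3 := h1.add h2
    refine h3.congr_deriv ?_
    rw [div_eq_mul_inv]
    ring
  have hGder : HasDerivAt G (deriv E w + (1 - 2*(t:ℂ)/w^2)) w := by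
    have hfun : G = fun z => E z + (z - (x:ℂ) + 2*(t:ℂ)/z) := by
      funext z
      simp only [hEdef]
      ring
    rw [hfun]
    exact hEat.hasDerivAt.add hPder
  have hderiv : deriv G w = deriv E w + (1 - 2*(t:ℂ)/w^2) := hGder.deriv
  -- notation
  set P : ℂ := w - (x:ℂ) + 2*(t:ℂ)/w with hP
  set T : ℂ := 1/w^2 + 2*(x:ℂ)/w^3 + 3*((x:ℂ)^2 - 2*(t:ℂ))/w^4 with hT
  have hGw : G w = P + E w := by simp only [hEdef, hP]; ring
  have hEw : ‖E w‖ ≤ C/r^2 := hG' w hrR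
  have hEwC : ‖E w‖ ≤ C := by
    have h1 : C/r^2 ≤ C := by
      apply div_le_self hC.le
      nlinarith
    linarith
  have hnorm2t : ‖2*(t:ℂ)/w‖ = 2*t/r := by
    rw [norm_div]
    congr 1
    have h1 : (2*(t:ℂ)) = ((2*t : ℝ) : ℂ) := by push_cast; ring
    rw [h1, Complex.norm_real, Real.norm_eq_abs, abs_of_nonneg (by linarith)]
  have hnormx : ‖(x:ℂ)‖ = |x| := by rw [Complex.norm_real, Real.norm_eq_abs]
  have h2tr : 2*t/r ≤ 2*t := div_le_self (by linarith) hr1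
  have h2tr' : 0 ≤ 2*t/r := by positivity
  have hPub : ‖P‖ ≤ 2*r := by
    calc ‖P‖ ≤ ‖w - (x:ℂ)‖ + ‖2*(t:ℂ)/w‖ := norm_add_le _ _
      _ ≤ ‖w‖ + ‖(x:ℂ)‖ + ‖2*(t:ℂ)/w‖ := by
          have := norm_sub_le w ((x:ℂ)); linarith
      _ ≤ 2*r := by rw [hnormx, hnorm2t, ← hr]; linarith
  have hPlb : r - |x| - 2*t ≤ ‖P‖ := by
    have hwid : w = P + (x:ℂ) - 2*(t:ℂ)/w := by rw [hP]; ring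
    have h1 : ‖w‖ ≤ ‖P + (x:ℂ)‖ + ‖2*(t:ℂ)/w‖ := by
      calc ‖w‖ = ‖P + (x:ℂ) - 2*(t:ℂ)/w‖ := by rw [← hwid]
        _ ≤ ‖P + (x:ℂ)‖ + ‖2*(t:ℂ)/w‖ := norm_sub_le _ _
    have h2 : ‖P + (x:ℂ)‖ ≤ ‖P‖ + |x| := by
      have := norm_add_le P ((x:ℂ)); rw [hnormx] at this; linarith
    rw [hnorm2t, ← hr] at h1
    linarith
  have hGlb : r/2 ≤ ‖G w‖ := by
    have h1 : ‖P‖ ≤ ‖P + E w‖ + ‖E w‖ := by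
      have h2 := norm_sub_le (P + E w) (E w)
      rw [add_sub_cancel_right] at h2
      linarith
    rw [hGw]
    linarith
  have hGne : G w ≠ 0 := by
    intro h
    rw [h, norm_zero] at hGlb
    linarith
  refine ⟨hGne, ?_⟩
  -- bound |T|
  have hTub : ‖T‖ ≤ M/r^2 := by
    have e1 : ‖(1/w^2 : ℂ)‖ = 1/r^2 := by rw [norm_div, norm_one, norm_pow, ← hr]
    have e2 : ‖2*(x:ℂ)/w^3‖ = ‖2*(x:ℂ)‖/r^3 := by rw [norm_div, norm_pow, ← hr]
    have e3 : ‖3*((x:ℂ)^2 - 2*(t:ℂ))/w^4‖ = ‖3*((x:ℂ)^2 - 2*(t:ℂ))‖/r^4 := by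
      rw [norm_div, norm_pow, ← hr]
    have p23 : r^2 ≤ r^3 := pow_le_pow_right₀ hr1 (by norm_num)
    have p24 : r^2 ≤ r^4 := pow_le_pow_right₀ hr1 (by norm_num)
    have i2 : ‖2*(x:ℂ)‖/r^3 ≤ ‖2*(x:ℂ)‖/r^2 :=
      div_le_div_of_nonneg_left (norm_nonneg _) (by positivity) p23
    have i3 : ‖3*((x:ℂ)^2 - 2*(t:ℂ))‖/r^4 ≤ ‖3*((x:ℂ)^2 - 2*(t:ℂ))‖/r^2 :=
      div_le_div_of_nonneg_left (norm_nonneg _) (by positivity) p24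
    have tri : ‖T‖ ≤ ‖(1/w^2 : ℂ)‖ + ‖2*(x:ℂ)/w^3‖ + ‖3*((x:ℂ)^2 - 2*(t:ℂ))/w^4‖ := by
      rw [hT]
      refine (norm_add_le _ _).trans ?_
      have := norm_add_le (1/w^2 : ℂ) (2*(x:ℂ)/w^3)
      linarith
    rw [e1, e2, e3] at tri
    have : M/r^2 = 1/r^2 + ‖2*(x:ℂ)‖/r^2 + ‖3*((x:ℂ)^2 - 2*(t:ℂ))‖/r^2 := by
      rw [hM]; ring
    linarith
  -- bound on the rational remainder
  have hDub : ‖(1 - 2*(t:ℂ)/w^2) - T * P^2‖ ≤ B/r^3 := by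
    have hD : (1 - 2*(t:ℂ)/w^2) - T * P^2 = (c3*w^3 + c2*w^2 + c1*w + c0) / w^6 := by
      rw [hT, hP, hc3, hc2, hc1, hc0]
      exact aux_rat_identity t x w hw0
    rw [hD, norm_div, norm_pow, ← hr]
    have hnum : ‖c3*w^3 + c2*w^2 + c1*w + c0‖ ≤ B * r^3 := by
      have t3 : ‖c3*w^3‖ = ‖c3‖ * r^3 := by rw [norm_mul, norm_pow, ← hr]
      have t2 : ‖c2*w^2‖ = ‖c2‖ * r^2 := by rw [norm_mul, norm_pow, ← hr]
      have t1 : ‖c1*w‖ = ‖c1‖ * r := by rw [norm_mul, ← hr]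
      have htr : ‖c3*w^3 + c2*w^2 + c1*w + c0‖ ≤ ‖c3‖*r^3 + ‖c2‖*r^2 + ‖c1‖*r + ‖c0‖ := by
        have a1 := norm_add_le (c3*w^3 + c2*w^2 + c1*w) c0
        have a2 := norm_add_le (c3*w^3 + c2*w^2) (c1*w)
        have a3 := norm_add_le (c3*w^3) (c2*w^2)
        rw [t1] at a2
        rw [t3, t2] at a3
        linarith
      have hax := aux_cubic (‖c3‖) (‖c2‖) (‖c1‖) (‖c0‖) r (norm_nonneg c2)
        (norm_nonneg c1) (norm_nonneg c0) hr1
      rw [hB]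
      linarith only [htr, hax]
    calc ‖c3*w^3 + c2*w^2 + c1*w + c0‖ / r^6 ≤ (B*r^3)/r^6 := by
          exact div_le_div_of_nonneg_right hnum (by positivity)
      _ = B/r^3 := by
          rw [div_eq_div_iff (pow_ne_zero 6 hrpos.ne') (pow_ne_zero 3 hrpos.ne')]
          ring
  -- bound on the cross term
  have hcross : ‖T * (2*P*(E w) + (E w)^2)‖ ≤ M*(4*C + C^2)/r^3 := by
    have h2PE : ‖2*P*(E w) + (E w)^2‖ ≤ (4*C + C^2)/r := by
      have n1 : ‖2*P*(E w)‖ = 2*‖P‖*‖E w‖ := by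
        rw [norm_mul, norm_mul]
        norm_num
      have b1 : 2*‖P‖*‖E w‖ ≤ 2*(2*r)*(C/r^2) := by
        have hEnn : (0:ℝ) ≤ ‖E w‖ := norm_nonneg _
        have hPnn : (0:ℝ) ≤ ‖P‖ := norm_nonneg _
        nlinarith
      have e1 : 2*(2*r)*(C/r^2) = 4*C/r := by
        field_simp
        ring
      have n2 : ‖(E w)^2‖ = ‖E w‖^2 := norm_pow _ _
      have b2 : ‖E w‖^2 ≤ (C/r^2)^2 := by
        apply pow_le_pow_left₀ (norm_nonneg _) hEw
      have e2 : (C/r^2)^2 ≤ C^2/r := by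
        have h24 : ((r^2)^2 : ℝ) = r^4 := by ring
        rw [div_pow, h24]
        apply div_le_div_of_nonneg_left (by positivity) hrpos
        have := pow_le_pow_right₀ hr1 (show 1 ≤ 4 by norm_num)
        simpa using this
      have tri := norm_add_le (2*P*(E w)) ((E w)^2)
      have efin : 4*C/r + C^2/r = (4*C + C^2)/r := by ring
      rw [n1] at tri
      rw [n2] at tri
      linarith only [tri, b1, e1, b2, e2, efin]
    calc ‖T * (2*P*(E w) + (E w)^2)‖ = ‖T‖ * ‖2*P*(E w) + (E w)^2‖ := norm_mul _ _
      _ ≤ (M/r^2) * ((4*C + C^2)/r) := by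
          apply mul_le_mul hTub h2PE (norm_nonneg _) (by positivity)
      _ = M*(4*C + C^2)/r^3 := by rw [div_mul_div_comm, ← pow_succ]
  -- assemble numerator bound
  have hNform : deriv G w - T * (G w)^2
      = ((1 - 2*(t:ℂ)/w^2) - T * P^2) + deriv E w - T * (2*P*(E w) + (E w)^2) := by
    rw [hderiv, hGw]
    ring
  have hNub : ‖deriv G w - T * (G w)^2‖ ≤ K/r^3 := by
    have tri1 := norm_sub_le (((1 - 2*(t:ℂ)/w^2) - T * P^2) + deriv E w)
      (T * (2*P*(E w) + (E w)^2))
    have tri2 := norm_add_le ((1 - 2*(t:ℂ)/w^2) - T * P^2) (deriv E w)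
    have hKr : K/r^3 = B/r^3 + 8*C/r^3 + M*(4*C + C^2)/r^3 := by rw [hK]; ring
    rw [hNform]
    linarith only [tri1, tri2, hKr, hDub, hEderiv_bound, hcross]
  -- final assembly
  have hsplit : deriv G w / (G w)^2 - T = (deriv G w - T * (G w)^2) / (G w)^2 := by
    field_simp
  rw [hsplit, norm_div, norm_pow]
  have hGsq : (r/2)^2 ≤ ‖G w‖^2 := pow_le_pow_left₀ (by linarith) hGlb 2
  calc ‖deriv G w - T * (G w)^2‖ / ‖G w‖^2 ≤ (K/r^3) / ((r/2)^2) :=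
        div_le_div₀ (by positivity) hNub (by positivity) hGsq
    _ = 4*K/r^5 := by
        rw [div_div, div_eq_div_iff (mul_ne_zero (pow_ne_zero 3 hrpos.ne')
          (pow_ne_zero 2 hρ.ne')) (pow_ne_zero 5 hrpos.ne')]
        ring
end

section
/- Let t ≥ 0, x ∈ ℝ and C, R > 0, and let G be holomorphic on {w ∈ ℂ : |w| > R} with |G(w) − (w − x + 2t/w)| ≤ C·|w|⁻² for all |w| > R. Then there exist R''' ≥ R, C''' > 0 (depending only on R, C, x, t) and a holomorphic function S on {w ∈ ℂ : |w| > R'''} such that S(w)² = G'(w)/G(w)² and |w·S(w) − (1 + x/w + (x² − 3t)/w²)| ≤ C'''·|w|⁻³ for all |w| > R'''. -/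
open Complex Metric

noncomputable def Complex.abs : AbsoluteValue ℂ ℝ := NormedField.toAbsoluteValue ℂ

theorem Complex.norm_eq_abs (z : ℂ) : ‖z‖ = Complex.abs z := rfl

theorem Complex.abs_ofReal (r : ℝ) : Complex.abs (r : ℂ) = |r| := Complex.norm_real r

theorem Complex.abs_two : Complex.abs (2 : ℂ) = 2 := by
  rw [← Complex.norm_eq_abs]; norm_num

theorem Complex.continuous_abs : Continuous Complex.abs := continuous_norm

lemma habs_sub_le' (a b : ℂ) : Complex.abs (a - b) ≤ Complex.abs a + Complex.abs b := by
  rw [sub_eq_add_neg]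
  simpa using Complex.abs.add_le a (-b)

lemma habs_lower (a b : ℂ) : Complex.abs a - Complex.abs b ≤ Complex.abs (a + b) := by
  have h := Complex.abs.add_le (a + b) (-b)
  rw [add_neg_cancel_right, Complex.abs.map_neg] at h
  linarith

lemma habs_lower' (a b : ℂ) : Complex.abs a - Complex.abs b ≤ Complex.abs (a - b) := by
  have h := Complex.abs.add_le (a - b) b
  rw [sub_add_cancel] at h
  linarith

/-- Cauchy estimate for the derivative of a function small at infinity. -/
lemma cauchy_ext {R C : ℝ} (hR : 0 < R) (hC : 0 ≤ C) {E : ℂ → ℂ}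
    (hE : DifferentiableOn ℂ E {z : ℂ | R < Complex.abs z})
    (hb : ∀ z : ℂ, R < Complex.abs z → Complex.abs (E z) ≤ C / Complex.abs z ^ 2)
    {w : ℂ} (hw : 2 * R < Complex.abs w) :
    Complex.abs (deriv E w) ≤ 8 * C / Complex.abs w ^ 3 := by
  have hw0 : 0 < Complex.abs w := by linarith
  have hr0 : 0 < Complex.abs w / 2 := by positivity
  have hrR : R < Complex.abs w / 2 := by linarith
  have hlow : ∀ z : ℂ, Complex.abs (z - w) ≤ Complex.abs w / 2 →
      Complex.abs w / 2 ≤ Complex.abs z := by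
    intro z hz
    have h := habs_lower' w z
    have h2 : Complex.abs (w - z) = Complex.abs (z - w) := Complex.abs.map_sub w z
    linarith [h2 ▸ h]
  have hsub : closedBall w (Complex.abs w / 2) ⊆ {z : ℂ | R < Complex.abs z} := by
    intro z hz
    simp only [mem_closedBall, dist_eq] at hz
    exact lt_of_lt_of_le hrR (hlow z hz)
  have hball : ∀ z ∈ sphere w (Complex.abs w / 2), ‖E z‖ ≤ C / (Complex.abs w / 2) ^ 2 := by
    intro z hz
    simp only [mem_sphere, dist_eq] at hz
    have hz' := hlow z hz.le
    have hzR : R < Complex.abs z := lt_of_lt_of_le hrR hz'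
    calc ‖E z‖ = Complex.abs (E z) := Complex.norm_eq_abs _
      _ ≤ C / Complex.abs z ^ 2 := hb z hzR
      _ ≤ C / (Complex.abs w / 2) ^ 2 := by
          apply div_le_div_of_nonneg_left hC (by positivity)
          exact pow_le_pow_left₀ hr0.le hz' 2
  have hdc : DiffContOnCl ℂ E (ball w (Complex.abs w / 2)) := by
    apply DifferentiableOn.diffContOnCl
    rw [closure_ball w hr0.ne']
    exact hE.mono hsub
  have h := Complex.norm_deriv_le_of_forall_mem_sphere_norm_le hr0 hdc hball
  rw [Complex.norm_eq_abs] at h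
  calc Complex.abs (deriv E w) ≤ C / (Complex.abs w / 2) ^ 2 / (Complex.abs w / 2) := h
    _ = 8 * C / Complex.abs w ^ 3 := by
        field_simp
        ring

set_option maxHeartbeats 4000000 in
set_option maxRecDepth 100000 in
lemma key_est (t x : ℝ) (ht : 0 ≤ t) (C R : ℝ) (hC : 0 < C) (hR : 0 < R)
    (A Cc K1 K2 K4 C2 K3 Rf : ℝ)
    (hA : A = |x|) (hCc : Cc = |x ^ 2 - 3 * t|)
    (hK1 : K1 = t + A * (2 * t + Cc) + 2 * t * Cc)
    (hK2 : K2 = 2 * A * (2 * t + Cc) + 4 * t * Cc + K1 ^ 2)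
    (hK4 : K4 = K2 + 17 * C + 3 * C ^ 2)
    (hC2v : C2 = 4 * K4) (hK3 : K3 = A + Cc)
    (hRf : Rf = 2 * R + 1 + 2 * (A + 2 * t + C) + 5 * K3 + 2 * C2)
    (G : ℂ → ℂ) (hhol : DifferentiableOn ℂ G {w : ℂ | R < Complex.abs w})
    (hG : ∀ w : ℂ, R < Complex.abs w →
      Complex.abs (G w - (w - (x : ℂ) + 2 * (t : ℂ) / w)) ≤ C / Complex.abs w ^ 2)
    (w : ℂ) (habs : Rf < Complex.abs w) :
    w ≠ 0 ∧ G w ≠ 0 ∧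
    Complex.abs (w ^ 2 * deriv G w / (G w) ^ 2
        - (1 + (x : ℂ) / w + ((x : ℂ) ^ 2 - 3 * (t : ℂ)) / w ^ 2) ^ 2)
      ≤ C2 / Complex.abs w ^ 3 ∧
    Complex.abs ((1 + (x : ℂ) / w + ((x : ℂ) ^ 2 - 3 * (t : ℂ)) / w ^ 2) - 1) ≤ 1 / 2 ∧
    Complex.abs (w ^ 2 * deriv G w / (G w) ^ 2 - 1) ≤ 1 / 2 := by
  have hA0 : 0 ≤ A := hA ▸ abs_nonneg _
  have hCc0 : 0 ≤ Cc := hCc ▸ abs_nonneg _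
  have hK10 : 0 ≤ K1 := by rw [hK1]; positivity
  have hK20 : 0 ≤ K2 := by rw [hK2, hK1]; positivity
  have hK40 : 0 < K4 := by rw [hK4, hK2, hK1]; positivity
  have hC20 : 0 < C2 := by rw [hC2v, hK4, hK2, hK1]; positivity
  have hK30 : 0 ≤ K3 := by rw [hK3]; positivity
  -- auxiliary functions
  set gf : ℂ → ℂ := fun z => z - (x : ℂ) + 2 * (t : ℂ) / z with hgf
  set Ef : ℂ → ℂ := fun z => G z - (z - (x : ℂ) + 2 * (t : ℂ) / z) with hEf
  set Pf : ℂ → ℂ := fun z => 1 + (x : ℂ) / z + ((x : ℂ) ^ 2 - 3 * (t : ℂ)) / z ^ 2 with hPf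
  set Qf : ℂ → ℂ := fun z => z ^ 2 * deriv G z / (G z) ^ 2 with hQf
  have hopen : IsOpen {z : ℂ | R < Complex.abs z} :=
    isOpen_lt continuous_const Complex.continuous_abs
  have hEdiff : DifferentiableOn ℂ Ef {z : ℂ | R < Complex.abs z} := by
    apply hhol.sub
    intro z hz
    simp only [Set.mem_setOf_eq] at hz
    have hz0 : z ≠ 0 := by
      intro h; rw [h] at hz; simp at hz; linarith
    apply DifferentiableAt.differentiableWithinAt
    have h : DifferentiableAt ℂ (fun z : ℂ => z - (x:ℂ) + 2 * (t:ℂ) * z⁻¹) z :=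
      ((differentiableAt_id.sub_const _).add ((differentiableAt_inv hz0).const_mul _))
    simpa [div_eq_mul_inv] using h
  have hEb : ∀ z : ℂ, R < Complex.abs z → Complex.abs (Ef z) ≤ C / Complex.abs z ^ 2 := hG
  -- derivative of G
  have hDG : ∀ w : ℂ, R < Complex.abs w →
      deriv G w = (1 - 2 * (t : ℂ) / w ^ 2) + deriv Ef w := by
    intro w hw
    have hw0 : w ≠ 0 := by
      intro h; rw [h] at hw; simp at hw; linarith
    have hGd : DifferentiableAt ℂ G w :=
      hhol.differentiableAt (hopen.mem_nhds hw)
    have hgd : HasDerivAt (fun z : ℂ => z - (x:ℂ) + 2 * (t:ℂ) / z)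
        (1 - 2 * (t:ℂ) / w ^ 2) w := by
      have h1 : HasDerivAt (fun z : ℂ => z - (x:ℂ) + 2 * (t:ℂ) * z⁻¹)
        (1 + 2 * (t:ℂ) * (-(w ^ 2)⁻¹)) w :=
        ((hasDerivAt_id w).sub_const _).add ((hasDerivAt_inv hw0).const_mul _)
      have h2 : (1 : ℂ) + 2 * (t:ℂ) * (-(w ^ 2)⁻¹) = 1 - 2 * (t:ℂ) / w ^ 2 := by
        rw [div_eq_mul_inv]; ring
      rw [h2] at h1
      simpa [div_eq_mul_inv] using h1
    have hsub : HasDerivAt Ef (deriv G w - (1 - 2 * (t:ℂ) / w ^ 2)) w := by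
      exact hGd.hasDerivAt.sub hgd
    rw [hsub.deriv]; ring
  -- analyticity of deriv G
  have hanG : AnalyticOnNhd ℂ (deriv G) {z : ℂ | R < Complex.abs z} :=
    (hhol.analyticOnNhd hopen).deriv
  have hw1 : 1 ≤ Complex.abs w := by
    rw [hRf] at habs; linarith
  have hw0a : 0 < Complex.abs w := by linarith
  have hw0 : w ≠ 0 := by
    intro h; rw [h] at hw0a; simp at hw0a
  have hwR : R < Complex.abs w := by rw [hRf] at habs; linarith
  have hw2R : 2 * R < Complex.abs w := by rw [hRf] at habs; linarith
  have h1w2 : (1:ℝ) ≤ Complex.abs w ^ 2 := by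
    calc (1:ℝ) = 1 ^ 2 := by norm_num
      _ ≤ Complex.abs w ^ 2 := pow_le_pow_left₀ (by norm_num) hw1 2
  have hww : Complex.abs w ≤ Complex.abs w ^ 2 := by
    calc Complex.abs w = Complex.abs w * 1 := (mul_one _).symm
      _ ≤ Complex.abs w * Complex.abs w := mul_le_mul_of_nonneg_left hw1 hw0a.le
      _ = Complex.abs w ^ 2 := (sq (Complex.abs w)).symm
  have hw45 : Complex.abs w ^ 4 ≤ Complex.abs w ^ 5 := by
    have := pow_le_pow_right₀ hw1 (by norm_num : 4 ≤ 5)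
    exact this
  -- absolute values of constants
  have habs_t : Complex.abs ((t : ℂ)) = t := by
    rw [Complex.abs_ofReal, _root_.abs_of_nonneg ht]
  have habs_x : Complex.abs ((x : ℂ)) = A := by rw [hA]; exact Complex.abs_ofReal x
  have habs_c : Complex.abs ((x : ℂ) ^ 2 - 3 * (t : ℂ)) = Cc := by
    have h : ((x : ℂ) ^ 2 - 3 * (t : ℂ)) = ((x ^ 2 - 3 * t : ℝ) : ℂ) := by push_cast; ring
    rw [h, Complex.abs_ofReal, hCc]
  have habs_bc : Complex.abs (2 * (t:ℂ) - ((x:ℂ) ^ 2 - 3 * (t:ℂ))) ≤ 2 * t + Cc := by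
    calc Complex.abs (2 * (t:ℂ) - ((x:ℂ) ^ 2 - 3 * (t:ℂ)))
        ≤ Complex.abs (2 * (t:ℂ)) + Complex.abs ((x:ℂ) ^ 2 - 3 * (t:ℂ)) :=
          habs_sub_le' _ _
      _ = 2 * t + Cc := by rw [map_mul, habs_t, Complex.abs_two, habs_c]
  -- upper bound on g
  have hgub : Complex.abs (gf w) ≤ 2 * Complex.abs w := by
    have h1 : Complex.abs (gf w) ≤ Complex.abs w + (A + 2 * t) := by
      calc Complex.abs (gf w) ≤ Complex.abs (w - (x:ℂ)) + Complex.abs (2 * (t:ℂ) / w) :=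
            Complex.abs.add_le _ _
        _ ≤ (Complex.abs w + A) + 2 * t / Complex.abs w := by
            rw [map_div₀, map_mul, habs_t, Complex.abs_two]
            have := habs_sub_le' w ((x:ℂ))
            rw [habs_x] at this
            exact add_le_add this le_rfl
        _ ≤ Complex.abs w + (A + 2 * t) := by
            have h2 : 2 * t / Complex.abs w ≤ 2 * t := by
              rw [div_le_iff₀ hw0a]; exact le_mul_of_one_le_right (by positivity) hw1
            linarith
    have h3 : A + 2 * t ≤ Complex.abs w := by rw [hRf] at habs; linarith
    linarith
  -- lower bound on G
  have hElocal : Complex.abs (Ef w) ≤ C / Complex.abs w ^ 2 := hEb w hwR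
  have hEsmall : Complex.abs (Ef w) ≤ C := by
    calc Complex.abs (Ef w) ≤ C / Complex.abs w ^ 2 := hElocal
      _ ≤ C / 1 := by
          apply div_le_div_of_nonneg_left hC.le one_pos
          exact h1w2
      _ = C := div_one C
  have hglb : Complex.abs w - (A + 2 * t) ≤ Complex.abs (gf w) := by
    have h1 : gf w = w + (-(x:ℂ) + 2 * (t:ℂ) / w) := by simp only [hgf]; ring
    have h2 : Complex.abs (-(x:ℂ) + 2 * (t:ℂ) / w) ≤ A + 2 * t := by
      calc Complex.abs (-(x:ℂ) + 2 * (t:ℂ) / w)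
          ≤ Complex.abs (-(x:ℂ)) + Complex.abs (2 * (t:ℂ) / w) := Complex.abs.add_le _ _
        _ = A + 2 * t / Complex.abs w := by
            rw [Complex.abs.map_neg, habs_x, map_div₀, map_mul, habs_t, Complex.abs_two]
        _ ≤ A + 2 * t := by
            have : 2 * t / Complex.abs w ≤ 2 * t := by
              rw [div_le_iff₀ hw0a]; exact le_mul_of_one_le_right (by positivity) hw1
            linarith
    have h3 := habs_lower w (-(x:ℂ) + 2 * (t:ℂ) / w)
    rw [← h1] at h3
    linarith
  have hGw : G w = gf w + Ef w := by simp only [hgf, hEf]; ring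
  have hGlb : Complex.abs w / 2 ≤ Complex.abs (G w) := by
    have h1 := habs_lower (gf w) (Ef w)
    rw [← hGw] at h1
    have h2 : Complex.abs w / 2 + (A + 2 * t + C) ≤ Complex.abs w := by
      rw [hRf] at habs; linarith
    linarith
  have hG0 : G w ≠ 0 := by
    intro h
    rw [h] at hGlb; simp at hGlb; linarith
  -- derivative bound on Ef
  have hE' : Complex.abs (deriv Ef w) ≤ 8 * C / Complex.abs w ^ 3 :=
    cauchy_ext hR hC.le hEdiff hEb hw2R
  -- bound on |Pf w - 1|
  have hPm1 : Complex.abs (Pf w - 1) ≤ K3 / Complex.abs w := by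
    have h : Pf w - 1 = (x:ℂ) / w + ((x:ℂ) ^ 2 - 3 * (t:ℂ)) / w ^ 2 := by
      simp only [hPf]; ring
    rw [h]
    calc Complex.abs ((x:ℂ) / w + ((x:ℂ) ^ 2 - 3 * (t:ℂ)) / w ^ 2)
        ≤ Complex.abs ((x:ℂ) / w) + Complex.abs (((x:ℂ) ^ 2 - 3 * (t:ℂ)) / w ^ 2) :=
          Complex.abs.add_le _ _
      _ = A / Complex.abs w + Cc / Complex.abs w ^ 2 := by
          rw [map_div₀, map_div₀, habs_x, habs_c, map_pow]
      _ ≤ A / Complex.abs w + Cc / Complex.abs w := by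
          have h2 : Cc / Complex.abs w ^ 2 ≤ Cc / Complex.abs w := by
            apply div_le_div_of_nonneg_left hCc0 hw0a
            exact hww
          linarith
      _ = K3 / Complex.abs w := by rw [hK3]; ring
  have hPhalf : Complex.abs (Pf w - 1) ≤ 1 / 2 := by
    calc Complex.abs (Pf w - 1) ≤ K3 / Complex.abs w := hPm1
      _ ≤ 1 / 2 := by
          rw [div_le_iff₀ hw0a]
          rw [hRf] at habs; linarith
  have hPub : Complex.abs (Pf w) ≤ 3 / 2 := by
    have h := Complex.abs.add_le (Pf w - 1) 1
    rw [sub_add_cancel, map_one] at h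
    linarith
  -- polynomial quantities
  set Pn : ℂ := w ^ 2 + (x:ℂ) * w + ((x:ℂ) ^ 2 - 3 * (t:ℂ)) with hPn
  set gn : ℂ := w ^ 2 - (x:ℂ) * w + 2 * (t:ℂ) with hgn
  set sn : ℂ := -(t:ℂ) * w ^ 2 + (x:ℂ) * (2 * (t:ℂ) - ((x:ℂ) ^ 2 - 3 * (t:ℂ))) * w
      + 2 * (t:ℂ) * ((x:ℂ) ^ 2 - 3 * (t:ℂ)) with hsn
  set rn : ℂ := -(2 * (x:ℂ) * (2 * (t:ℂ) - ((x:ℂ) ^ 2 - 3 * (t:ℂ))) * w ^ 5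
      + 2 * (2 * (t:ℂ)) * ((x:ℂ) ^ 2 - 3 * (t:ℂ)) * w ^ 4 + sn ^ 2) with hrn
  set Nn : ℂ := rn + w ^ 8 * deriv Ef w
      - Pn ^ 2 * (2 * gn * (Ef w * w) + (Ef w * w) ^ 2) with hNn
  -- quotient representations
  have hPq : Pf w = Pn / w ^ 2 := by
    simp only [hPf, hPn]
    field_simp
  have hgq : gf w = gn / w := by
    simp only [hgf, hgn]
    field_simp
  have hGq : G w = (gn + Ef w * w) / w := by
    rw [hGw, hgq]
    field_simp
  have hDq : deriv G w = ((w ^ 2 - 2 * (t:ℂ)) + deriv Ef w * w ^ 2) / w ^ 2 := by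
    rw [hDG w hwR]
    field_simp
    try ring
  -- the N identity
  have hNq : w ^ 2 * deriv G w - (Pf w) ^ 2 * (G w) ^ 2 = Nn / w ^ 6 := by
    rw [hDq, hPq, hGq]
    have hpoly : Nn = w ^ 6 * ((w ^ 2 - 2 * (t:ℂ)) + deriv Ef w * w ^ 2)
        - Pn ^ 2 * (gn + Ef w * w) ^ 2 := by
      simp only [hNn, hrn, hsn, hPn, hgn]
      ring
    rw [hpoly]
    rw [div_pow, div_pow]
    field_simp
  -- bound |sn|
  have hsb : Complex.abs sn ≤ K1 * Complex.abs w ^ 2 := by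
    have h1 : Complex.abs (-(t:ℂ) * w ^ 2) = t * Complex.abs w ^ 2 := by
      rw [map_mul, Complex.abs.map_neg, habs_t, map_pow]
    have h2 : Complex.abs ((x:ℂ) * (2 * (t:ℂ) - ((x:ℂ) ^ 2 - 3 * (t:ℂ))) * w)
        ≤ A * (2 * t + Cc) * Complex.abs w ^ 2 := by
      rw [map_mul, map_mul, habs_x]
      calc A * Complex.abs (2 * (t:ℂ) - ((x:ℂ) ^ 2 - 3 * (t:ℂ))) * Complex.abs w
          ≤ A * (2 * t + Cc) * Complex.abs w := by
            apply mul_le_mul_of_nonneg_right _ hw0a.le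
            exact mul_le_mul_of_nonneg_left habs_bc hA0
        _ ≤ A * (2 * t + Cc) * Complex.abs w ^ 2 := by
            have := mul_le_mul_of_nonneg_left hww (by positivity : (0:ℝ) ≤ A * (2 * t + Cc))
            linarith
    have h3 : Complex.abs (2 * (t:ℂ) * ((x:ℂ) ^ 2 - 3 * (t:ℂ))) ≤ 2 * t * Cc * Complex.abs w ^ 2 := by
      rw [map_mul, map_mul, habs_t, habs_c, Complex.abs_two]
      have := mul_le_mul_of_nonneg_left h1w2 (by positivity : (0:ℝ) ≤ 2 * t * Cc)
      linarith
    calc Complex.abs sn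
        ≤ Complex.abs (-(t:ℂ) * w ^ 2 + (x:ℂ) * (2 * (t:ℂ) - ((x:ℂ) ^ 2 - 3 * (t:ℂ))) * w)
          + Complex.abs (2 * (t:ℂ) * ((x:ℂ) ^ 2 - 3 * (t:ℂ))) := Complex.abs.add_le _ _
      _ ≤ Complex.abs (-(t:ℂ) * w ^ 2) + Complex.abs ((x:ℂ) * (2 * (t:ℂ) - ((x:ℂ) ^ 2 - 3 * (t:ℂ))) * w)
          + Complex.abs (2 * (t:ℂ) * ((x:ℂ) ^ 2 - 3 * (t:ℂ))) := by
          have := Complex.abs.add_le (-(t:ℂ) * w ^ 2) ((x:ℂ) * (2 * (t:ℂ) - ((x:ℂ) ^ 2 - 3 * (t:ℂ))) * w)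
          linarith
      _ ≤ t * Complex.abs w ^ 2 + A * (2 * t + Cc) * Complex.abs w ^ 2
          + 2 * t * Cc * Complex.abs w ^ 2 := by rw [h1] at *; linarith
      _ = K1 * Complex.abs w ^ 2 := by rw [hK1]; ring
  -- bound |rn|
  have hrb : Complex.abs rn ≤ K2 * Complex.abs w ^ 5 := by
    have h1 : Complex.abs (2 * (x:ℂ) * (2 * (t:ℂ) - ((x:ℂ) ^ 2 - 3 * (t:ℂ))) * w ^ 5)
        ≤ 2 * A * (2 * t + Cc) * Complex.abs w ^ 5 := by
      rw [map_mul, map_mul, map_mul, habs_x, Complex.abs_two, map_pow]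
      apply mul_le_mul_of_nonneg_right _ (by positivity)
      exact mul_le_mul_of_nonneg_left habs_bc (by positivity)
    have h2 : Complex.abs (2 * (2 * (t:ℂ)) * ((x:ℂ) ^ 2 - 3 * (t:ℂ)) * w ^ 4)
        ≤ 4 * t * Cc * Complex.abs w ^ 5 := by
      simp only [map_mul, map_pow, habs_t, habs_c, Complex.abs_two]
      have h6 := mul_le_mul_of_nonneg_left hw45 (by positivity : (0:ℝ) ≤ 4 * t * Cc)
      linarith
    have h3 : Complex.abs (sn ^ 2) ≤ K1 ^ 2 * Complex.abs w ^ 5 := by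
      rw [map_pow]
      have h4 : Complex.abs sn ^ 2 ≤ (K1 * Complex.abs w ^ 2) ^ 2 :=
        pow_le_pow_left₀ (Complex.abs.nonneg _) hsb 2
      have h6 := mul_le_mul_of_nonneg_left hw45 (by positivity : (0:ℝ) ≤ K1 ^ 2)
      have h7 : (K1 * Complex.abs w ^ 2) ^ 2 = K1 ^ 2 * Complex.abs w ^ 4 := by ring
      linarith [h4, h6, h7 ▸ h4]
    rw [hrn, Complex.abs.map_neg]
    calc Complex.abs (2 * (x:ℂ) * (2 * (t:ℂ) - ((x:ℂ) ^ 2 - 3 * (t:ℂ))) * w ^ 5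
            + 2 * (2 * (t:ℂ)) * ((x:ℂ) ^ 2 - 3 * (t:ℂ)) * w ^ 4 + sn ^ 2)
        ≤ Complex.abs (2 * (x:ℂ) * (2 * (t:ℂ) - ((x:ℂ) ^ 2 - 3 * (t:ℂ))) * w ^ 5)
          + Complex.abs (2 * (2 * (t:ℂ)) * ((x:ℂ) ^ 2 - 3 * (t:ℂ)) * w ^ 4)
          + Complex.abs (sn ^ 2) := by
          have ha := Complex.abs.add_le (2 * (x:ℂ) * (2 * (t:ℂ) - ((x:ℂ) ^ 2 - 3 * (t:ℂ))) * w ^ 5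
            + 2 * (2 * (t:ℂ)) * ((x:ℂ) ^ 2 - 3 * (t:ℂ)) * w ^ 4) (sn ^ 2)
          have hb2 := Complex.abs.add_le (2 * (x:ℂ) * (2 * (t:ℂ) - ((x:ℂ) ^ 2 - 3 * (t:ℂ))) * w ^ 5)
            (2 * (2 * (t:ℂ)) * ((x:ℂ) ^ 2 - 3 * (t:ℂ)) * w ^ 4)
          linarith
      _ ≤ K2 * Complex.abs w ^ 5 := by rw [hK2]; linarith
  -- bounds for the other Nn pieces
  have hPnb : Complex.abs Pn ≤ (3 / 2) * Complex.abs w ^ 2 := by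
    have h : Pn = Pf w * w ^ 2 := by
      rw [hPq]; field_simp
    rw [h, map_mul, map_pow]
    exact mul_le_mul_of_nonneg_right hPub (by positivity)
  have hgnb : Complex.abs gn ≤ 2 * Complex.abs w ^ 2 := by
    have h : gn = gf w * w := by
      rw [hgq]; field_simp
    rw [h, map_mul]
    calc Complex.abs (gf w) * Complex.abs w ≤ (2 * Complex.abs w) * Complex.abs w :=
          mul_le_mul_of_nonneg_right hgub hw0a.le
      _ = 2 * Complex.abs w ^ 2 := by ring
  have hewb : Complex.abs (Ef w * w) ≤ C / Complex.abs w := by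
    rw [map_mul]
    calc Complex.abs (Ef w) * Complex.abs w ≤ (C / Complex.abs w ^ 2) * Complex.abs w :=
          mul_le_mul_of_nonneg_right hElocal hw0a.le
      _ = C / Complex.abs w := by field_simp
  have hT2 : Complex.abs (w ^ 8 * deriv Ef w) ≤ 8 * C * Complex.abs w ^ 5 := by
    rw [map_mul, map_pow]
    calc Complex.abs w ^ 8 * Complex.abs (deriv Ef w)
        ≤ Complex.abs w ^ 8 * (8 * C / Complex.abs w ^ 3) :=
          mul_le_mul_of_nonneg_left hE' (by positivity)
      _ = 8 * C * Complex.abs w ^ 5 := by field_simp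
  have hT3 : Complex.abs (Pn ^ 2 * (2 * gn * (Ef w * w) + (Ef w * w) ^ 2))
      ≤ (9 * C + 3 * C ^ 2) * Complex.abs w ^ 5 := by
    have hinner : Complex.abs (2 * gn * (Ef w * w) + (Ef w * w) ^ 2)
        ≤ (4 * C + C ^ 2) * Complex.abs w := by
      have ha : Complex.abs (2 * gn * (Ef w * w)) ≤ 4 * C * Complex.abs w := by
        rw [map_mul, map_mul, Complex.abs_two]
        calc 2 * Complex.abs gn * Complex.abs (Ef w * w)
            ≤ 2 * (2 * Complex.abs w ^ 2) * (C / Complex.abs w) := by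
              apply mul_le_mul
              · linarith [hgnb]
              · exact hewb
              · exact Complex.abs.nonneg _
              · positivity
          _ = 4 * C * Complex.abs w := by field_simp; ring
      have hb2 : Complex.abs ((Ef w * w) ^ 2) ≤ C ^ 2 * Complex.abs w := by
        rw [map_pow]
        have h4 : Complex.abs (Ef w * w) ^ 2 ≤ (C / Complex.abs w) ^ 2 :=
          pow_le_pow_left₀ (Complex.abs.nonneg _) hewb 2
        have h5 : (C / Complex.abs w) ^ 2 ≤ C ^ 2 * Complex.abs w := by
          calc (C / Complex.abs w) ^ 2 = C ^ 2 / Complex.abs w ^ 2 := by ring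
            _ ≤ C ^ 2 / 1 := by
                apply div_le_div_of_nonneg_left (by positivity) one_pos
                exact h1w2
            _ = C ^ 2 := div_one _
            _ ≤ C ^ 2 * Complex.abs w := le_mul_of_one_le_right (by positivity) hw1
        linarith
      calc Complex.abs (2 * gn * (Ef w * w) + (Ef w * w) ^ 2)
          ≤ Complex.abs (2 * gn * (Ef w * w)) + Complex.abs ((Ef w * w) ^ 2) :=
            Complex.abs.add_le _ _
        _ ≤ (4 * C + C ^ 2) * Complex.abs w := by linarith
    rw [map_mul, map_pow]
    calc Complex.abs Pn ^ 2 * Complex.abs (2 * gn * (Ef w * w) + (Ef w * w) ^ 2)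
        ≤ ((3 / 2) * Complex.abs w ^ 2) ^ 2 * ((4 * C + C ^ 2) * Complex.abs w) := by
          apply mul_le_mul
          · exact pow_le_pow_left₀ (Complex.abs.nonneg _) hPnb 2
          · exact hinner
          · exact Complex.abs.nonneg _
          · positivity
      _ = (9 * C + (9 / 4) * C ^ 2) * Complex.abs w ^ 5 := by ring
      _ ≤ (9 * C + 3 * C ^ 2) * Complex.abs w ^ 5 := by
          apply mul_le_mul_of_nonneg_right _ (by positivity)
          linarith [sq_nonneg C]
  -- bound |Nn|
  have hNb : Complex.abs Nn ≤ K4 * Complex.abs w ^ 5 := by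
    calc Complex.abs Nn
        ≤ Complex.abs rn + Complex.abs (w ^ 8 * deriv Ef w)
          + Complex.abs (Pn ^ 2 * (2 * gn * (Ef w * w) + (Ef w * w) ^ 2)) := by
          rw [hNn, sub_eq_add_neg]
          have ha := Complex.abs.add_le (rn + w ^ 8 * deriv Ef w)
            (-(Pn ^ 2 * (2 * gn * (Ef w * w) + (Ef w * w) ^ 2)))
          have hb2 := Complex.abs.add_le rn (w ^ 8 * deriv Ef w)
          rw [Complex.abs.map_neg] at ha
          linarith
      _ ≤ K4 * Complex.abs w ^ 5 := by rw [hK4]; linarith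
  -- bound |Q - P^2|
  have hQP : Complex.abs (Qf w - (Pf w) ^ 2) ≤ C2 / Complex.abs w ^ 3 := by
    have hQrw : Qf w - (Pf w) ^ 2 =
        (w ^ 2 * deriv G w - (Pf w) ^ 2 * (G w) ^ 2) / (G w) ^ 2 := by
      simp only [hQf]
      field_simp
    have hGpos : 0 < Complex.abs (G w) := lt_of_lt_of_le (by positivity) hGlb
    rw [hQrw, hNq, map_div₀, map_div₀, map_pow, map_pow]
    rw [div_div]
    rw [div_le_div_iff₀ (by positivity) (by positivity)]
    have hGsq : (Complex.abs w / 2) ^ 2 ≤ Complex.abs (G w) ^ 2 :=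
      pow_le_pow_left₀ (by positivity) hGlb 2
    have h6 : Complex.abs w ^ 6 = Complex.abs w ^ 3 * Complex.abs w ^ 3 := by ring
    calc Complex.abs Nn * Complex.abs w ^ 3 ≤ (K4 * Complex.abs w ^ 5) * Complex.abs w ^ 3 := by
          apply mul_le_mul_of_nonneg_right hNb (by positivity)
      _ = (4 * K4) * (Complex.abs w ^ 6 * (Complex.abs w / 2) ^ 2) := by ring
      _ ≤ C2 * (Complex.abs w ^ 6 * Complex.abs (G w) ^ 2) := by
          rw [hC2v]
          apply mul_le_mul_of_nonneg_left _ (by positivity)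
          apply mul_le_mul_of_nonneg_left hGsq (by positivity)
  -- bound |Q - 1|
  have hQ1 : Complex.abs (Qf w - 1) ≤ 1 / 2 := by
    have hP2m1 : Complex.abs ((Pf w) ^ 2 - 1) ≤ (5 / 2) * (K3 / Complex.abs w) := by
      have hfact : (Pf w) ^ 2 - 1 = (Pf w - 1) * (Pf w + 1) := by ring
      rw [hfact, map_mul]
      have hPp1 : Complex.abs (Pf w + 1) ≤ 5 / 2 := by
        calc Complex.abs (Pf w + 1) ≤ Complex.abs (Pf w) + Complex.abs 1 :=
              Complex.abs.add_le _ _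
          _ ≤ 3 / 2 + 1 := by rw [map_one]; linarith
          _ = 5 / 2 := by norm_num
      calc Complex.abs (Pf w - 1) * Complex.abs (Pf w + 1)
          ≤ (K3 / Complex.abs w) * (5 / 2) := by
            apply mul_le_mul hPm1 hPp1 (Complex.abs.nonneg _) (by positivity)
        _ = (5 / 2) * (K3 / Complex.abs w) := by ring
    have hsplit : Complex.abs (Qf w - 1)
        ≤ Complex.abs (Qf w - (Pf w) ^ 2) + Complex.abs ((Pf w) ^ 2 - 1) := by
      have h : Qf w - 1 = (Qf w - (Pf w) ^ 2) + ((Pf w) ^ 2 - 1) := by ring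
      rw [h]
      exact Complex.abs.add_le _ _
    have h1 : Complex.abs (Qf w - (Pf w) ^ 2) ≤ C2 / Complex.abs w := by
      calc Complex.abs (Qf w - (Pf w) ^ 2) ≤ C2 / Complex.abs w ^ 3 := hQP
        _ ≤ C2 / Complex.abs w := by
          apply div_le_div_of_nonneg_left hC20.le hw0a
          calc Complex.abs w = Complex.abs w * 1 * 1 := by ring
            _ ≤ Complex.abs w * Complex.abs w * Complex.abs w := by
                apply mul_le_mul (mul_le_mul_of_nonneg_left hw1 hw0a.le) hw1 one_pos.le
                positivity
            _ = Complex.abs w ^ 3 := by ring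
    have h2 : C2 / Complex.abs w + (5 / 2) * (K3 / Complex.abs w) ≤ 1 / 2 := by
      have hsum : C2 / Complex.abs w + (5 / 2) * (K3 / Complex.abs w)
          = (C2 + (5 / 2) * K3) / Complex.abs w := by ring
      rw [hsum, div_le_iff₀ hw0a]
      rw [hRf] at habs
      linarith
    linarith
  exact ⟨hw0, hG0, hQP, hPhalf, hQ1⟩

set_option maxHeartbeats 4000000 in
set_option maxRecDepth 100000 in
theorem sqrt_expansion (t x : ℝ) (ht : 0 ≤ t) (C R : ℝ) (hC : 0 < C) (hR : 0 < R)
    (G : ℂ → ℂ) (hhol : DifferentiableOn ℂ G {w : ℂ | R < ‖w‖})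
    (hG : ∀ w : ℂ, R < ‖w‖ →
      ‖G w - (w - (x : ℂ) + 2 * (t : ℂ) / w)‖ ≤ C / ‖w‖ ^ 2) :
    ∃ R''' : ℝ, R ≤ R''' ∧ ∃ C''' : ℝ, 0 < C''' ∧ ∃ S : ℂ → ℂ,
      DifferentiableOn ℂ S {w : ℂ | R''' < ‖w‖} ∧
      ∀ w : ℂ, R''' < ‖w‖ →
        (S w) ^ 2 = deriv G w / (G w) ^ 2 ∧
        ‖w * S w - (1 + (x : ℂ) / w + ((x : ℂ) ^ 2 - 3 * (t : ℂ)) / w ^ 2)‖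
          ≤ C''' / ‖w‖ ^ 3 := by
  simp only [Complex.norm_eq_abs] at hhol hG ⊢
  -- real constants
  set A : ℝ := |x| with hA
  set Cc : ℝ := |x ^ 2 - 3 * t| with hCc
  have hA0 : 0 ≤ A := abs_nonneg _
  have hCc0 : 0 ≤ Cc := abs_nonneg _
  set K1 : ℝ := t + A * (2 * t + Cc) + 2 * t * Cc with hK1
  set K2 : ℝ := 2 * A * (2 * t + Cc) + 4 * t * Cc + K1 ^ 2 with hK2
  set K4 : ℝ := K2 + 17 * C + 3 * C ^ 2 with hK4
  set C2 : ℝ := 4 * K4 with hC2v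
  have hK10 : 0 ≤ K1 := by rw [hK1]; positivity
  have hK20 : 0 ≤ K2 := by rw [hK2, hK1]; positivity
  have hK40 : 0 < K4 := by rw [hK4, hK2, hK1]; positivity
  have hC20 : 0 < C2 := by rw [hC2v, hK4, hK2, hK1]; positivity
  set K3 : ℝ := A + Cc with hK3
  have hK30 : 0 ≤ K3 := by rw [hK3]; positivity
  set Rf : ℝ := 2 * R + 1 + 2 * (A + 2 * t + C) + 5 * K3 + 2 * C2 with hRf
  -- auxiliary functions
  set gf : ℂ → ℂ := fun z => z - (x : ℂ) + 2 * (t : ℂ) / z with hgf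
  set Ef : ℂ → ℂ := fun z => G z - (z - (x : ℂ) + 2 * (t : ℂ) / z) with hEf
  set Pf : ℂ → ℂ := fun z => 1 + (x : ℂ) / z + ((x : ℂ) ^ 2 - 3 * (t : ℂ)) / z ^ 2 with hPf
  set Qf : ℂ → ℂ := fun z => z ^ 2 * deriv G z / (G z) ^ 2 with hQf
  have hopen : IsOpen {z : ℂ | R < Complex.abs z} :=
    isOpen_lt continuous_const Complex.continuous_abs
  have hEdiff : DifferentiableOn ℂ Ef {z : ℂ | R < Complex.abs z} := by
    apply hhol.sub
    intro z hz
    simp only [Set.mem_setOf_eq] at hz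
    have hz0 : z ≠ 0 := by
      intro h; rw [h] at hz; simp at hz; linarith
    apply DifferentiableAt.differentiableWithinAt
    have h : DifferentiableAt ℂ (fun z : ℂ => z - (x:ℂ) + 2 * (t:ℂ) * z⁻¹) z :=
      ((differentiableAt_id.sub_const _).add ((differentiableAt_inv hz0).const_mul _))
    simpa [div_eq_mul_inv] using h
  have hEb : ∀ z : ℂ, R < Complex.abs z → Complex.abs (Ef z) ≤ C / Complex.abs z ^ 2 := hG
  -- derivative of G
  have hDG : ∀ w : ℂ, R < Complex.abs w →
      deriv G w = (1 - 2 * (t : ℂ) / w ^ 2) + deriv Ef w := by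
    intro w hw
    have hw0 : w ≠ 0 := by
      intro h; rw [h] at hw; simp at hw; linarith
    have hGd : DifferentiableAt ℂ G w :=
      hhol.differentiableAt (hopen.mem_nhds hw)
    have hgd : HasDerivAt (fun z : ℂ => z - (x:ℂ) + 2 * (t:ℂ) / z)
        (1 - 2 * (t:ℂ) / w ^ 2) w := by
      have h1 : HasDerivAt (fun z : ℂ => z - (x:ℂ) + 2 * (t:ℂ) * z⁻¹)
        (1 + 2 * (t:ℂ) * (-(w ^ 2)⁻¹)) w :=
        ((hasDerivAt_id w).sub_const _).add ((hasDerivAt_inv hw0).const_mul _)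
      have h2 : (1 : ℂ) + 2 * (t:ℂ) * (-(w ^ 2)⁻¹) = 1 - 2 * (t:ℂ) / w ^ 2 := by
        rw [div_eq_mul_inv]; ring
      rw [h2] at h1
      simpa [div_eq_mul_inv] using h1
    have hsub : HasDerivAt Ef (deriv G w - (1 - 2 * (t:ℂ) / w ^ 2)) w := by
      exact hGd.hasDerivAt.sub hgd
    rw [hsub.deriv]; ring
  -- analyticity of deriv G
  have hanG : AnalyticOnNhd ℂ (deriv G) {z : ℂ | R < Complex.abs z} :=
    (hhol.analyticOnNhd hopen).deriv
  have key : ∀ w : ℂ, Rf < Complex.abs w →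
      (w ≠ 0 ∧ G w ≠ 0 ∧
       Complex.abs (Qf w - (Pf w) ^ 2) ≤ C2 / Complex.abs w ^ 3 ∧
       Complex.abs (Pf w - 1) ≤ 1 / 2 ∧
       Complex.abs (Qf w - 1) ≤ 1 / 2) := by
    intro w hw
    have h := key_est t x ht C R hC hR A Cc K1 K2 K4 C2 K3 Rf hA hCc hK1 hK2 hK4 hC2v hK3 hRf
      G hhol hG w hw
    exact h
  -- define S
  set S : ℂ → ℂ := fun z => z⁻¹ * Complex.exp ((1 / 2 : ℂ) * Complex.log (Qf z)) with hS
  have hRRf : R ≤ Rf := by rw [hRf]; linarith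
  refine ⟨Rf, hRRf, C2, hC20, S, ?_, ?_⟩
  · -- differentiability
    intro w hw
    simp only [Set.mem_setOf_eq] at hw
    obtain ⟨hw0, hG0, hQP, hPhalf, hQ1⟩ := key w hw
    have hwR : R < Complex.abs w := lt_of_le_of_lt hRRf hw
    have hQre : (1 : ℝ) / 2 ≤ (Qf w).re := by
      have h1 : |(Qf w - 1).re| ≤ Complex.abs (Qf w - 1) := Complex.abs_re_le_norm _
      have h2 : (Qf w - 1).re = (Qf w).re - 1 := by simp
      rw [h2] at h1
      have h3 := (abs_le.1 h1).1
      linarith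
    have hQslit : Qf w ∈ Complex.slitPlane := Or.inl (by linarith)
    have hQdiff : DifferentiableAt ℂ Qf w := by
      have hd1 : DifferentiableAt ℂ (deriv G) w := (hanG w hwR).differentiableAt
      have hd2 : DifferentiableAt ℂ G w := hhol.differentiableAt (hopen.mem_nhds hwR)
      exact ((differentiableAt_pow 2).mul hd1).div (hd2.pow 2) (pow_ne_zero 2 hG0)
    have hSd : DifferentiableAt ℂ S w := by
      apply DifferentiableAt.mul
      · exact differentiableAt_inv hw0
      · exact ((hQdiff.clog hQslit).const_mul _).cexp
    exact hSd.differentiableWithinAt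
  · -- the two conclusions
    intro w hw
    obtain ⟨hw0, hG0, hQP, hPhalf, hQ1⟩ := key w hw
    have hQ0 : Qf w ≠ 0 := by
      intro h
      rw [h] at hQ1
      simp at hQ1
      norm_num at hQ1
    have hexp2 : (Complex.exp ((1 / 2 : ℂ) * Complex.log (Qf w))) ^ 2 = Qf w := by
      rw [sq, ← Complex.exp_add]
      have h : (1 / 2 : ℂ) * Complex.log (Qf w) + (1 / 2 : ℂ) * Complex.log (Qf w)
          = Complex.log (Qf w) := by ring
      rw [h, Complex.exp_log hQ0]
    constructor
    · -- S w ^ 2 = deriv G w / G w ^ 2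
      simp only [hS]
      rw [mul_pow, hexp2]
      simp only [hQf]
      field_simp
    · -- the estimate
      set u : ℂ := Complex.exp ((1 / 2 : ℂ) * Complex.log (Qf w)) with hu
      have hwS : w * S w = u := by
        rw [hu, hS]
        rw [← mul_assoc, mul_inv_cancel₀ hw0, one_mul]
      have hu2 : u ^ 2 = Qf w := hexp2
      have hure : 0 ≤ u.re := by
        rw [hu, Complex.exp_re]
        apply mul_nonneg (Real.exp_nonneg _)
        apply Real.cos_nonneg_of_mem_Icc
        have him : ((1 / 2 : ℂ) * Complex.log (Qf w)).im = (Complex.log (Qf w)).im / 2 := by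
          simp [Complex.mul_im]
          ring
        rw [him, Complex.log_im]
        constructor
        · have h := Complex.neg_pi_lt_arg (Qf w)
          linarith
        · have h := Complex.arg_le_pi (Qf w)
          linarith
      have hup1 : (1 : ℝ) ≤ Complex.abs (u + 1) := by
        have h1 : (u + 1).re ≤ Complex.abs (u + 1) := Complex.re_le_norm _
        have h2 : (u + 1).re = u.re + 1 := by simp
        linarith
      have hum1 : Complex.abs (u - 1) ≤ 1 / 2 := by
        have hfact : (u - 1) * (u + 1) = Qf w - 1 := by
          have h : (u - 1) * (u + 1) = u ^ 2 - 1 := by ring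
          rw [h, hu2]
        have h := congrArg Complex.abs hfact
        rw [map_mul] at h
        calc Complex.abs (u - 1) = Complex.abs (u - 1) * 1 := (mul_one _).symm
          _ ≤ Complex.abs (u - 1) * Complex.abs (u + 1) :=
            mul_le_mul_of_nonneg_left hup1 (Complex.abs.nonneg _)
          _ = Complex.abs (Qf w - 1) := h
          _ ≤ 1 / 2 := hQ1
      have huP : (1 : ℝ) ≤ Complex.abs (u + Pf w) := by
        have hd : u + Pf w = 2 + ((u - 1) + (Pf w - 1)) := by ring
        have h1 : Complex.abs ((u - 1) + (Pf w - 1)) ≤ 1 := by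
          calc Complex.abs ((u - 1) + (Pf w - 1))
              ≤ Complex.abs (u - 1) + Complex.abs (Pf w - 1) := Complex.abs.add_le _ _
            _ ≤ 1 / 2 + 1 / 2 := add_le_add hum1 hPhalf
            _ = 1 := by norm_num
        have h2 := habs_lower (2 : ℂ) ((u - 1) + (Pf w - 1))
        rw [← hd] at h2
        have habs2 : Complex.abs (2 : ℂ) = 2 := Complex.abs_two
        linarith
      have hfinal : Complex.abs (u - Pf w) ≤ Complex.abs (Qf w - (Pf w) ^ 2) := by
        have hfact : (u - Pf w) * (u + Pf w) = Qf w - (Pf w) ^ 2 := by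
          have h : (u - Pf w) * (u + Pf w) = u ^ 2 - (Pf w) ^ 2 := by ring
          rw [h, hu2]
        have h := congrArg Complex.abs hfact
        rw [map_mul] at h
        calc Complex.abs (u - Pf w) = Complex.abs (u - Pf w) * 1 := (mul_one _).symm
          _ ≤ Complex.abs (u - Pf w) * Complex.abs (u + Pf w) :=
            mul_le_mul_of_nonneg_left huP (Complex.abs.nonneg _)
          _ = Complex.abs (Qf w - (Pf w) ^ 2) := h
      calc Complex.abs (w * S w - (1 + (x : ℂ) / w + ((x : ℂ) ^ 2 - 3 * (t : ℂ)) / w ^ 2))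
          = Complex.abs (u - Pf w) := by rw [hwS]
        _ ≤ Complex.abs (Qf w - (Pf w) ^ 2) := hfinal
        _ ≤ C2 / Complex.abs w ^ 3 := hQP
end

section
/- Let (Ω, 𝓕, (𝓕_t)_{t≥0}, ℙ) be a filtered probability space and let (W_t)_{t≥0} be an adapted real-valued process such that W_t and W_t² are integrable for every t. Suppose there is a sequence (w_n) of nonzero complex numbers with |w_n| → ∞ and, for each n, an adapted complex-valued process (R^n_t)_{t≥0} such that for each t there is a constant C_t < ∞ with |R^n_t| ≤ C_t·|w_n|⁻³ almost surely for all n, and such that for each n the complex-valued process M^n_t = 1 + W_t/w_n + (W_t² − 3t)/w_n² + R^n_t is a martingale with respect to (𝓕_t). Then (W_t)_{t≥0} and (W_t² − 3t)_{t≥0} are martingales with respect to (𝓕_t). -/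
open MeasureTheory Filter Topology

/-- Coefficient-extraction: if `1 + W_t/wₙ + (W_t² − 3t)/wₙ² + Rⁿ_t` is a (complex)
martingale for a sequence `wₙ → ∞`, with `|Rⁿ_t| ≤ C_t |wₙ|⁻³` a.s., then `W_t` and
`W_t² − 3t` are martingales. -/
theorem coefficient_extraction {Ω : Type*} {m : MeasurableSpace Ω}
    (μ : Measure Ω) [IsProbabilityMeasure μ] (𝓕 : Filtration NNReal m)
    (W : NNReal → Ω → ℝ) (hWadp : Adapted 𝓕 W)
    (hWint : ∀ t, Integrable (W t) μ)
    (hW2int : ∀ t, Integrable (fun ω => W t ω ^ 2) μ)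
    (wn : ℕ → ℂ) (hwn : ∀ n, wn n ≠ 0)
    (hwn_lim : Tendsto (fun n => ‖wn n‖) atTop atTop)
    (R : ℕ → NNReal → Ω → ℂ) (hRadp : ∀ n, Adapted 𝓕 (R n))
    (hRbdd : ∀ t : NNReal, ∃ C : ℝ, ∀ n : ℕ,
      ∀ᵐ ω ∂μ, ‖R n t ω‖ ≤ C / ‖wn n‖ ^ 3)
    (hmart : ∀ n : ℕ, Martingale
      (fun (t : NNReal) (ω : Ω) =>
        1 + (W t ω : ℂ) / wn n + ((W t ω : ℂ) ^ 2 - 3 * ((t : ℝ) : ℂ)) / (wn n) ^ 2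
          + R n t ω) 𝓕 μ) :
    Martingale W 𝓕 μ ∧
      Martingale (fun (t : NNReal) (ω : Ω) => W t ω ^ 2 - 3 * (t : ℝ)) 𝓕 μ := by
  -- basic facts about |wn n|
  have habs_pos : ∀ n, 0 < ‖wn n‖ := fun n =>
    norm_pos_iff.mpr (hwn n)
  -- integrability of the pieces
  have hWc : ∀ u : NNReal, Integrable (fun ω => (W u ω : ℂ)) μ := fun u =>
    (hWint u).ofReal
  have hQint : ∀ u : NNReal, Integrable (fun ω => W u ω ^ 2 - 3 * (u : ℝ)) μ := fun u =>
    (hW2int u).sub (integrable_const _)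
  have hQc : ∀ u : NNReal, Integrable (fun ω => (W u ω : ℂ) ^ 2 - 3 * ((u : ℝ) : ℂ)) μ := by
    intro u
    refine ((hQint u).ofReal (𝕜 := ℂ)).congr (ae_of_all _ fun ω => ?_)
    push_cast
    norm_num
  have hrest : ∀ n (u : NNReal), Integrable
      (fun ω => 1 + (W u ω : ℂ) / wn n + ((W u ω : ℂ) ^ 2 - 3 * ((u : ℝ) : ℂ)) / (wn n) ^ 2)
      μ := fun n u =>
    ((integrable_const 1).add ((hWc u).div_const _)).add ((hQc u).div_const _)
  have hRint : ∀ n (u : NNReal), Integrable (R n u) μ := by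
    intro n u
    have hM := (hmart n).integrable u
    exact (hM.sub (hrest n u)).congr (ae_of_all _ fun ω => by
      simp only [Pi.sub_apply]; ring)
  -- the key set-integral identities
  have key : ∀ s t : NNReal, s ≤ t → ∀ A : Set Ω, MeasurableSet[𝓕 s] A →
      (∫ ω in A, W s ω ∂μ = ∫ ω in A, W t ω ∂μ) ∧
      (∫ ω in A, (W s ω ^ 2 - 3 * (s : ℝ)) ∂μ = ∫ ω in A, (W t ω ^ 2 - 3 * (t : ℝ)) ∂μ) := by
    intro s t hst A hA
    obtain ⟨Ct, hCt⟩ := hRbdd t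
    obtain ⟨Cs, hCs⟩ := hRbdd s
    -- bound on set integrals of R
    have hbnd : ∀ n (u : NNReal) (C : ℝ),
        (∀ᵐ ω ∂μ, ‖R n u ω‖ ≤ C / ‖wn n‖ ^ 3) →
        ‖∫ ω in A, R n u ω ∂μ‖ ≤ C / ‖wn n‖ ^ 3 := by
      intro n u C hC
      calc ‖∫ ω in A, R n u ω ∂μ‖ ≤ ∫ ω in A, ‖R n u ω‖ ∂μ :=
            norm_integral_le_integral_norm _
        _ ≤ ∫ ω, ‖R n u ω‖ ∂μ :=
            setIntegral_le_integral (hRint n u).norm (ae_of_all _ fun ω => norm_nonneg _)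
        _ ≤ ∫ _ω, C / ‖wn n‖ ^ 3 ∂μ :=
            integral_mono_ae (hRint n u).norm (integrable_const _)
              (hC.mono fun ω h => by simpa using h)
        _ = C / ‖wn n‖ ^ 3 := by simp
    set a : NNReal → ℝ := fun u => ∫ ω in A, W u ω ∂μ with ha
    set b : NNReal → ℝ := fun u => ∫ ω in A, (W u ω ^ 2 - 3 * (u : ℝ)) ∂μ with hb
    set r : ℕ → NNReal → ℂ := fun n u => ∫ ω in A, R n u ω ∂μ with hr
    -- expansion of set integrals of the martingale
    have hexp : ∀ n (u : NNReal),
        ∫ ω in A, (1 + (W u ω : ℂ) / wn n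
            + ((W u ω : ℂ) ^ 2 - 3 * ((u : ℝ) : ℂ)) / (wn n) ^ 2 + R n u ω) ∂μ
          = ((μ A).toReal : ℂ) + (a u : ℂ) / wn n + (b u : ℂ) / (wn n) ^ 2 + r n u := by
      intro n u
      have i1 : Integrable (fun _ω : Ω => (1 : ℂ)) (μ.restrict A) :=
        (integrable_const 1).integrableOn
      have i2 : Integrable (fun ω => (W u ω : ℂ) / wn n) (μ.restrict A) :=
        ((hWc u).div_const _).integrableOn
      have i3 : Integrable (fun ω => ((W u ω : ℂ) ^ 2 - 3 * ((u : ℝ) : ℂ)) / (wn n) ^ 2)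
          (μ.restrict A) := ((hQc u).div_const _).integrableOn
      have i12 : Integrable (fun ω => 1 + (W u ω : ℂ) / wn n) (μ.restrict A) := i1.add i2
      have i123 : Integrable
          (fun ω => 1 + (W u ω : ℂ) / wn n
            + ((W u ω : ℂ) ^ 2 - 3 * ((u : ℝ) : ℂ)) / (wn n) ^ 2) (μ.restrict A) := i12.add i3
      rw [integral_add i123 (hRint n u).integrableOn, integral_add i12 i3, integral_add i1 i2]
      have e1 : ∫ _ω in A, (1 : ℂ) ∂μ = ((μ A).toReal : ℂ) := by
        simp [setIntegral_const, measureReal_def]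
      have e2 : ∫ ω in A, (W u ω : ℂ) / wn n ∂μ = (a u : ℂ) / wn n := by
        rw [integral_div]
        congr 1
        exact integral_ofReal
      have e3 : ∫ ω in A, ((W u ω : ℂ) ^ 2 - 3 * ((u : ℝ) : ℂ)) / (wn n) ^ 2 ∂μ
          = (b u : ℂ) / (wn n) ^ 2 := by
        have e : (fun ω => ((W u ω : ℂ) ^ 2 - 3 * ((u : ℝ) : ℂ)) / (wn n) ^ 2)
            = fun ω => ((W u ω ^ 2 - 3 * (u : ℝ) : ℝ) : ℂ) / (wn n) ^ 2 := by
          funext ω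
          rw [Complex.ofReal_sub, Complex.ofReal_mul, Complex.ofReal_pow]
          norm_num
        rw [e, integral_div]
        congr 1
        exact integral_ofReal
      rw [e1, e2, e3]
    -- the per-n identity
    have heq : ∀ n, (a t : ℂ) / wn n + (b t : ℂ) / (wn n) ^ 2 + r n t
        = (a s : ℂ) / wn n + (b s : ℂ) / (wn n) ^ 2 + r n s := by
      intro n
      have h := (hmart n).setIntegral_eq hst hA
      rw [hexp n s, hexp n t] at h
      linear_combination -h
    have hpoly : ∀ n, ((a t - a s : ℝ) : ℂ) * wn n + ((b t - b s : ℝ) : ℂ)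
        + (r n t - r n s) * (wn n) ^ 2 = 0 := by
      intro n
      have hw := hwn n
      have hw2 : (wn n) ^ 2 ≠ 0 := pow_ne_zero 2 hw
      have e : ∀ (x y : ℝ) (ρ : ℂ), (x : ℂ) / wn n + (y : ℂ) / (wn n) ^ 2 + ρ
          = ((x : ℂ) * wn n + (y : ℂ) + ρ * (wn n) ^ 2) / (wn n) ^ 2 := by
        intro x y ρ
        field_simp
      have h := heq n
      rw [e, e] at h
      have h' := (div_left_inj' hw2).mp h
      push_cast
      linear_combination h'
    -- combined bound on r n t - r n s
    have hKnonneg : 0 ≤ Ct + Cs := by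
      have hω : ∃ ω, ‖R 0 t ω‖ ≤ Ct / ‖wn 0‖ ^ 3 ∧
          ‖R 0 s ω‖ ≤ Cs / ‖wn 0‖ ^ 3 := by
        have := ((hCt 0).and (hCs 0)).exists
        exact this
      obtain ⟨ω, h1, h2⟩ := hω
      have hp : (0 : ℝ) < ‖wn 0‖ ^ 3 := pow_pos (habs_pos 0) 3
      have h1' : 0 ≤ Ct := by
        have h0 := (norm_nonneg _).trans h1
        have := (le_div_iff₀ hp).mp h0
        simpa using this
      have h2' : 0 ≤ Cs := by
        have h0 := (norm_nonneg _).trans h2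
        have := (le_div_iff₀ hp).mp h0
        simpa using this
      linarith
    have hρ : ∀ n, ‖r n t - r n s‖ ≤ (Ct + Cs) / ‖wn n‖ ^ 3 := by
      intro n
      calc ‖r n t - r n s‖ ≤ ‖r n t‖ + ‖r n s‖ := norm_sub_le _ _
        _ ≤ Ct / ‖wn n‖ ^ 3 + Cs / ‖wn n‖ ^ 3 :=
            add_le_add (hbnd n t Ct (hCt n)) (hbnd n s Cs (hCs n))
        _ = (Ct + Cs) / ‖wn n‖ ^ 3 := by ring
    have hinvlim : Tendsto (fun n => (‖wn n‖)⁻¹) atTop (𝓝 0) :=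
      hwn_lim.inv_tendsto_atTop
    -- first coefficient: a t = a s
    have hD : a t - a s = 0 := by
      have hfor : ∀ n, ((a t - a s : ℝ) : ℂ)
          = -((((b t - b s : ℝ) : ℂ) + (r n t - r n s) * (wn n) ^ 2) * (wn n)⁻¹) := by
        intro n
        have h := hpoly n
        have hw := hwn n
        have h2 : ((a t - a s : ℝ) : ℂ) * wn n
            = -(((b t - b s : ℝ) : ℂ) + (r n t - r n s) * (wn n) ^ 2) := by
          linear_combination h
        calc ((a t - a s : ℝ) : ℂ) = ((a t - a s : ℝ) : ℂ) * wn n * (wn n)⁻¹ := by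
              rw [mul_assoc, mul_inv_cancel₀ hw, mul_one]
          _ = -((((b t - b s : ℝ) : ℂ) + (r n t - r n s) * (wn n) ^ 2) * (wn n)⁻¹) := by
              rw [h2]; ring
      have hlim : Tendsto
          (fun n => -((((b t - b s : ℝ) : ℂ) + (r n t - r n s) * (wn n) ^ 2) * (wn n)⁻¹))
          atTop (𝓝 0) := by
        apply squeeze_zero_norm' (a := fun n => (|b t - b s| + (Ct + Cs)) * (‖wn n‖)⁻¹)
        · filter_upwards [hwn_lim.eventually_ge_atTop 1] with n hn
          have h1 : ‖(((b t - b s : ℝ) : ℂ) + (r n t - r n s) * (wn n) ^ 2)‖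
              ≤ |b t - b s| + (Ct + Cs) := by
            calc ‖(((b t - b s : ℝ) : ℂ) + (r n t - r n s) * (wn n) ^ 2)‖
                ≤ ‖(((b t - b s : ℝ) : ℂ))‖ + ‖(r n t - r n s) * (wn n) ^ 2‖ := norm_add_le _ _
              _ ≤ |b t - b s| + (Ct + Cs) := by
                  gcongr
                  · rw [Complex.norm_real, Real.norm_eq_abs]
                  · rw [norm_mul, norm_pow]
                    calc ‖r n t - r n s‖ * ‖wn n‖ ^ 2
                        ≤ (Ct + Cs) / ‖wn n‖ ^ 3 * ‖wn n‖ ^ 2 := by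
                          gcongr
                          exact hρ n
                      _ = (Ct + Cs) / ‖wn n‖ := by
                          field_simp
                      _ ≤ (Ct + Cs) := div_le_self hKnonneg hn
          rw [norm_neg, norm_mul, norm_inv]
          gcongr
        · simpa using hinvlim.const_mul (|b t - b s| + (Ct + Cs))
      have : Tendsto (fun _ : ℕ => ((a t - a s : ℝ) : ℂ)) atTop (𝓝 0) := by
        rw [tendsto_congr hfor]
        exact hlim
      have := tendsto_nhds_unique this tendsto_const_nhds
      exact_mod_cast this.symm
    -- second coefficient: b t = b s
    have hE : b t - b s = 0 := by
      have hfor : ∀ n, ((b t - b s : ℝ) : ℂ) = -((r n t - r n s) * (wn n) ^ 2) := by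
        intro n
        have h := hpoly n
        rw [hD] at h
        push_cast at h ⊢
        linear_combination h
      have hlim : Tendsto (fun n => -((r n t - r n s) * (wn n) ^ 2)) atTop (𝓝 0) := by
        apply squeeze_zero_norm (a := fun n => (Ct + Cs) * (‖wn n‖)⁻¹)
        · intro n
          rw [norm_neg, norm_mul, norm_pow]
          calc ‖r n t - r n s‖ * ‖wn n‖ ^ 2
              ≤ (Ct + Cs) / ‖wn n‖ ^ 3 * ‖wn n‖ ^ 2 := by
                gcongr
                exact hρ n
            _ = (Ct + Cs) * (‖wn n‖)⁻¹ := by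
                have := (habs_pos n).ne'
                field_simp
        · simpa using hinvlim.const_mul (Ct + Cs)
      have : Tendsto (fun _ : ℕ => ((b t - b s : ℝ) : ℂ)) atTop (𝓝 0) := by
        rw [tendsto_congr hfor]
        exact hlim
      have := tendsto_nhds_unique this tendsto_const_nhds
      exact_mod_cast this.symm
    exact ⟨by linarith [sub_eq_zero.mp hD], by linarith [sub_eq_zero.mp hE]⟩
  constructor
  · refine ⟨hWadp.stronglyAdapted, fun s t hst => ?_⟩
    exact (ae_eq_condExp_of_forall_setIntegral_eq (𝓕.le s) (hWint t)
      (fun A hA _ => (hWint s).integrableOn)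
      (fun A hA _ => (key s t hst A hA).1)
      ((hWadp.stronglyAdapted s).aestronglyMeasurable)).symm
  · refine ⟨fun u => ((hWadp.stronglyAdapted u).pow 2).sub stronglyMeasurable_const, fun s t hst => ?_⟩
    exact (ae_eq_condExp_of_forall_setIntegral_eq (𝓕.le s) (hQint t)
      (fun A hA _ => (hQint s).integrableOn)
      (fun A hA _ => (key s t hst A hA).2)
      (((hWadp.stronglyAdapted s).pow 2).sub stronglyMeasurable_const).aestronglyMeasurable).symm
end
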